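/- arXiv:1807.11065 — 5 statements merged into one kernel-verified Lean document; each statement's English description precedes it below -/
import Mathlib

section
/- Let q be a prime power and F_q the finite field with q elements. If X ⊆ F_q is a finite set with |X| > q^{1/2}, then R(X) = F_q. -/
open scoped Pointwise

/-- The quotient set `R(X) = {(x₁ - x₂)/(x₃ - x₄) : x₁, x₂, x₃, x₄ ∈ X, x₃ ≠ x₄}`. -/
def quotSet {F : Type*} [Field F] (X : Set F) : Set F :=
  {r | ∃ x₁ ∈ X, ∃ x₂ ∈ X, ∃ x₃ ∈ X, ∃ x₄ ∈ X, x₃ ≠ x₄ ∧ r = (x₁ - x₂) / (x₃ - x₄)}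

/-- **Lemma 2.2.** If `X ⊆ F_q` with `|X| > q^{1/2}`, then `R(X) = F_q`. -/
theorem quotSet_eq_univ_of_large
    (q : ℕ) (F : Type) [Field F] [Fintype F] (hq : Fintype.card F = q)
    (X : Set F) (hX : (q : ℝ) ^ ((1 : ℝ) / 2) < (X.ncard : ℝ)) :
    quotSet X = Set.univ := by
  classical
  -- numeric: q < |X|^2
  have hsq : ((q : ℝ) ^ ((1 : ℝ) / 2)) ^ 2 = (q : ℝ) := by
    rw [← Real.rpow_natCast _ 2, ← Real.rpow_mul (by positivity)]
    norm_num
  have hlt : (q : ℝ) < ((X.ncard : ℝ)) ^ 2 := by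
    calc (q : ℝ) = ((q : ℝ) ^ ((1 : ℝ) / 2)) ^ 2 := hsq.symm
    _ < (X.ncard : ℝ) ^ 2 := by
        apply pow_lt_pow_left₀ hX (by positivity)
        norm_num
  have hltn : q < X.ncard * X.ncard := by
    have := hlt
    rw [sq] at this
    exact_mod_cast this
  have hcardX : Fintype.card X = X.ncard := by
    rw [← Nat.card_eq_fintype_card, Nat.card_coe_set_eq]
  ext r
  simp only [Set.mem_univ, iff_true]
  -- pigeonhole on (a, b) ↦ a - r * b
  have hcard : Fintype.card F < Fintype.card (X × X) := by
    rw [Fintype.card_prod, hcardX, hq]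
    exact hltn
  obtain ⟨⟨a, b⟩, ⟨c, d⟩, hne, heq⟩ :=
    Fintype.exists_ne_map_eq_of_card_lt (fun p : X × X => (p.1 : F) - r * (p.2 : F)) hcard
  have hbd : (b : F) ≠ (d : F) := by
    intro h
    apply hne
    have hac : (a : F) = (c : F) := by
      have := heq
      rw [h] at this
      linear_combination this
    ext <;> simp [hac, h]
  refine ⟨a, a.2, c, c.2, b, b.2, d, d.2, hbd, ?_⟩
  have hsub : (b : F) - (d : F) ≠ 0 := sub_ne_zero.mpr hbd
  field_simp
  linear_combination -heq
end

section
/- Let q be a prime power and F_q the finite field with q elements. Let X ⊆ F_q be a finite set with at least two elements such that 1 + R(X) ⊆ R(X) and X·R(X) ⊆ R(X), where 1 + R(X) = {1 + r : r ∈ R(X)} and X·R(X) = {x·r : x ∈ X, r ∈ R(X)}. Then R(X) is the smallest subfield of F_q containing X. -/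
open scoped Pointwise

/-- **Lemma 2.3.** If `1 + R(X) ⊆ R(X)` and `X · R(X) ⊆ R(X)`, then `R(X)` is the subfield of
`F_q` generated by `X`. -/
theorem quotSet_eq_closure
    (q : ℕ) (F : Type) [Field F] [Fintype F] (hq : Fintype.card F = q)
    (X : Set F) (hX : 2 ≤ X.ncard)
    (h1 : {(1 : F)} + quotSet X ⊆ quotSet X)
    (h2 : X * quotSet X ⊆ quotSet X) :
    quotSet X = (Subfield.closure X : Set F) := by
  classical
  set R := quotSet X with hRdef
  have hRfin : R.Finite := Set.toFinite R
  obtain ⟨a, ha, b, hb, hab⟩ := (Set.one_lt_ncard (Set.toFinite X)).1 hX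
  have h0 : (0:F) ∈ R := ⟨a, ha, a, ha, a, ha, b, hb, hab, by simp⟩
  have h1R : (1:F) ∈ R := ⟨a, ha, b, hb, a, ha, b, hb, hab,
    (div_self (sub_ne_zero.2 hab)).symm⟩
  have hxr : ∀ x ∈ X, ∀ r ∈ R, x * r ∈ R := fun x hx r hr => h2 (Set.mul_mem_mul hx hr)
  have key : ∀ f : F → F, Function.Injective f → (∀ r ∈ R, f r ∈ R) →
      ∀ r ∈ R, ∃ r' ∈ R, f r' = r := by
    intro f hf hsub r hr
    have himg : f '' R = R := Set.eq_of_subset_of_ncard_le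
      (by rintro _ ⟨s, hs, rfl⟩; exact hsub s hs)
      (le_of_eq (Set.ncard_image_of_injective R hf).symm) hRfin
    rw [← himg] at hr
    obtain ⟨r', hr', h⟩ := hr
    exact ⟨r', hr', h⟩
  set A : Set F := {t | ∀ r ∈ R, t + r ∈ R} with hAdef
  have hA0 : (0:F) ∈ A := fun r hr => by simpa using hr
  have hA1 : (1:F) ∈ A := fun r hr => h1 (Set.add_mem_add (Set.mem_singleton 1) hr)
  have hAadd : ∀ t ∈ A, ∀ t' ∈ A, t + t' ∈ A := by
    intro t ht t' ht' r hr
    have := ht (t' + r) (ht' r hr)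
    rwa [← add_assoc] at this
  have hAneg : ∀ t ∈ A, -t ∈ A := by
    intro t ht r hr
    obtain ⟨r', hr', hfr⟩ := key (t + ·) (add_right_injective t) ht r hr
    have : -t + r = r' := by rw [← hfr]; ring
    rw [this]; exact hr'
  have hAX : ∀ x ∈ X, ∀ t ∈ A, x * t ∈ A := by
    intro x hx t ht r hr
    by_cases hx0 : x = 0
    · simpa [hx0] using hr
    · obtain ⟨r', hr', hfr⟩ := key (x * ·) (mul_right_injective₀ hx0) (hxr x hx) r hr
      have h' : x * (t + r') ∈ R := hxr x hx _ (ht r' hr')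
      have : x * t + r = x * (t + r') := by rw [← hfr]; ring
      rw [this]; exact h'
  have hAsub : A ⊆ R := fun t ht => by simpa using ht 0 h0
  set K : Set F := {t | ∀ u ∈ A, t * u ∈ A} with hKdef
  have hK1 : (1:F) ∈ K := fun u hu => by simpa using hu
  have hKA : K ⊆ A := fun t ht => by simpa using ht 1 hA1
  have hAfin : A.Finite := Set.toFinite A
  have keyA : ∀ t : F, t ≠ 0 → t ∈ K → ∀ u ∈ A, ∃ u' ∈ A, t * u' = u := by
    intro t ht0 ht u hu
    have himg : (t * ·) '' A = A := Set.eq_of_subset_of_ncard_le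
      (by rintro _ ⟨s, hs, rfl⟩; exact ht s hs)
      (le_of_eq (Set.ncard_image_of_injective A (mul_right_injective₀ ht0)).symm) hAfin
    rw [← himg] at hu
    obtain ⟨u', hu', h⟩ := hu
    exact ⟨u', hu', h⟩
  let S : Subfield F :=
  { carrier := K
    one_mem' := hK1
    zero_mem' := fun u hu => by simpa using hA0
    mul_mem' := by
      intro s t hs ht u hu
      rw [mul_assoc]
      exact hs _ (ht u hu)
    add_mem' := by
      intro s t hs ht u hu
      rw [add_mul]
      exact hAadd _ (hs u hu) _ (ht u hu)
    neg_mem' := by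
      intro s hs u hu
      rw [neg_mul]
      exact hAneg _ (hs u hu)
    inv_mem' := by
      intro t ht u hu
      by_cases ht0 : t = 0
      · simpa [ht0] using hA0
      · obtain ⟨u', hu', h⟩ := keyA t ht0 ht u hu
        rw [← h, inv_mul_cancel_left₀ ht0]
        exact hu' }
  have hXS : X ⊆ (S : Set F) := fun x hx => hAX x hx
  have hclS : Subfield.closure X ≤ S := Subfield.closure_le.2 hXS
  apply Set.Subset.antisymm
  · rintro r ⟨x₁, h₁, x₂, h₂, x₃, h₃, x₄, h₄, hne, rfl⟩
    exact div_mem (sub_mem (Subfield.subset_closure h₁) (Subfield.subset_closure h₂))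
      (sub_mem (Subfield.subset_closure h₃) (Subfield.subset_closure h₄))
  · intro r hr
    exact hAsub (hKA (hclS hr))
end

section
/- Let q be a prime power and F_q the finite field with q elements. For all constants K > 0 and δ > 0 there exists a constant c > 0 with the following property: if X ⊆ F_q is a finite set with at least two elements satisfying |R(X)| ≥ K·|X|², then there exists r ∈ R(X) such that for every subset X' ⊆ X with |X'| ≥ δ·|X| one has |X' + r·X'| ≥ c·|X|², where X' + r·X' = {a + r·b : a, b ∈ X'}. -/
open scoped Pointwise

open scoped Pointwise Combinatorics.Additive
open Finset

namespace PivotAux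

variable {F : Type} [Field F] [DecidableEq F]

def quad (r : F) (A : Finset F) : Finset ((F × F) × F × F) :=
  ((A ×ˢ A) ×ˢ A ×ˢ A).filter fun x => x.1.1 + r * x.2.1 = x.1.2 + r * x.2.2

def quadN (r : F) (A : Finset F) : Finset ((F × F) × F × F) :=
  ((A ×ˢ A) ×ˢ A ×ˢ A).filter fun x =>
    x.1.1 ≠ x.1.2 ∧ x.1.1 + r * x.2.1 = x.1.2 + r * x.2.2

lemma quad_card_eq_energy {r : F} (hr : r ≠ 0) (A : Finset F) :
    (quad r A).card = E[A, r • A] := by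
  have key : ∀ b : F, r * (b / r) = b := fun b => by field_simp
  unfold quad Finset.addEnergy
  refine card_bij' (fun x _ => ((x.1.1, x.1.2), (r * x.2.1, r * x.2.2)))
    (fun x _ => ((x.1.1, x.1.2), (x.2.1 / r, x.2.2 / r))) ?_ ?_ ?_ ?_
  · rintro ⟨⟨a1, a2⟩, c1, c2⟩ hx
    simp only [mem_filter, mem_product] at hx ⊢
    refine ⟨⟨⟨hx.1.1.1, hx.1.1.2⟩, ?_, ?_⟩, hx.2⟩
    · exact smul_mem_smul_finset hx.1.2.1
    · exact smul_mem_smul_finset hx.1.2.2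
  · rintro ⟨⟨a1, a2⟩, b1, b2⟩ hx
    simp only [mem_filter, mem_product] at hx ⊢
    obtain ⟨⟨⟨h1, h2⟩, h3, h4⟩, he⟩ := hx
    rw [mem_smul_finset] at h3 h4
    obtain ⟨c1, hc1, rfl⟩ := h3
    obtain ⟨c2, hc2, rfl⟩ := h4
    simp only [smul_eq_mul] at he ⊢
    rw [mul_div_cancel_left₀ _ hr, mul_div_cancel_left₀ _ hr]
    exact ⟨⟨⟨h1, h2⟩, hc1, hc2⟩, he⟩
  · rintro ⟨⟨a1, a2⟩, c1, c2⟩ _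
    simp only [mul_div_cancel_left₀ _ hr]
  · rintro ⟨⟨a1, a2⟩, b1, b2⟩ _
    simp only [key]

lemma quad_card_le {r : F} (hr : r ≠ 0) (A : Finset F) :
    (quad r A).card ≤ A.card ^ 2 + (quadN r A).card := by
  classical
  have hsplit : quad r A ⊆
      (((A ×ˢ A) ×ˢ A ×ˢ A).filter fun x =>
        x.1.1 = x.1.2 ∧ x.1.1 + r * x.2.1 = x.1.2 + r * x.2.2) ∪ quadN r A := by
    intro x hx
    unfold quad at hx
    rw [mem_filter] at hx
    rw [mem_union]
    by_cases h : x.1.1 = x.1.2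
    · exact Or.inl (by rw [mem_filter]; exact ⟨hx.1, h, hx.2⟩)
    · exact Or.inr (by unfold quadN; rw [mem_filter]; exact ⟨hx.1, h, hx.2⟩)
  refine (card_le_card hsplit).trans ((card_union_le _ _).trans ?_)
  gcongr
  rw [sq, ← card_product]
  apply card_le_card_of_injOn (fun x => (x.1.1, x.2.1))
  · rintro ⟨⟨a1, a2⟩, c1, c2⟩ hx
    simp only [mem_coe, mem_filter, mem_product] at hx ⊢
    exact ⟨hx.1.1.1, hx.1.2.1⟩
  · rintro ⟨⟨a1, a2⟩, c1, c2⟩ hx ⟨⟨a1', a2'⟩, c1', c2'⟩ hy hxy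
    simp only [mem_coe, mem_filter, mem_product] at hx hy
    obtain ⟨-, h12, he⟩ := hx
    obtain ⟨-, h12', he'⟩ := hy
    simp only [Prod.mk.injEq] at hxy
    obtain ⟨ha, hc⟩ := hxy
    subst h12' h12 ha hc
    have h2 : c1 = c2 := mul_left_cancel₀ hr (add_left_cancel he)
    have h2' : c1 = c2' := mul_left_cancel₀ hr (add_left_cancel he')
    simp [← h2, ← h2']

lemma sum_quadN_card_le (A : Finset F) (S : Finset F) :
    ∑ r ∈ S, (quadN r A).card ≤ A.card ^ 4 := by
  classical
  have hdisj : ∀ r1 ∈ S, ∀ r2 ∈ S, r1 ≠ r2 → Disjoint (quadN r1 A) (quadN r2 A) := by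
    intro r1 _ r2 _ hne
    rw [disjoint_left]
    rintro ⟨⟨a1, a2⟩, c1, c2⟩ hx hy
    unfold quadN at hx hy
    simp only [mem_filter] at hx hy
    obtain ⟨-, hne1, he1⟩ := hx
    obtain ⟨-, -, he2⟩ := hy
    have hc : c1 ≠ c2 := by
      rintro rfl
      exact hne1 (add_right_cancel he1)
    exact hne (mul_right_cancel₀ (sub_ne_zero.mpr hc) (by linear_combination he1 - he2))
  calc ∑ r ∈ S, (quadN r A).card = (S.biUnion fun r => quadN r A).card :=
        (card_biUnion hdisj).symm
    _ ≤ ((A ×ˢ A) ×ˢ A ×ˢ A).card := by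
        apply card_le_card
        intro x hx
        rw [mem_biUnion] at hx
        obtain ⟨r, -, hx⟩ := hx
        unfold quadN at hx
        exact mem_of_mem_filter x hx
    _ = A.card ^ 4 := by simp only [card_product]; ring

end PivotAux

open Finset PivotAux
open scoped Combinatorics.Additive

set_option maxHeartbeats 1000000 in
/-- **Lemma 2.4 (pivoting).** For all `K, δ > 0` there is `c > 0` such that: if `X ⊆ F_q` has
at least two elements and `|R(X)| ≥ K|X|²`, then there exists `r ∈ R(X)` such that for every
`X' ⊆ X` with `|X'| ≥ δ|X|` one has `|X' + rX'| ≥ c|X|²`. -/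
theorem pivoting :
    ∀ K δ : ℝ, 0 < K → 0 < δ → ∃ c : ℝ, 0 < c ∧
      ∀ (q : ℕ) (F : Type) [Field F] [Fintype F],
        Fintype.card F = q →
        ∀ X : Set F, 2 ≤ X.ncard →
          K * (X.ncard : ℝ) ^ 2 ≤ ((quotSet X).ncard : ℝ) →
          ∃ r ∈ quotSet X, ∀ X' ⊆ X, δ * (X.ncard : ℝ) ≤ (X'.ncard : ℝ) →
            c * (X.ncard : ℝ) ^ 2 ≤ ((X' + r • X').ncard : ℝ) := by
  intro K δ hK hδ
  refine ⟨δ ^ 4 * K / (K + 2), by positivity, ?_⟩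
  intro q F _ _ _hq X hX2 hR
  classical
  have hXfin : X.Finite := Set.toFinite X
  obtain ⟨A, hAcoe⟩ : ∃ A : Finset F, (↑A : Set F) = X := ⟨hXfin.toFinset, hXfin.coe_toFinset⟩
  have hAcard : A.card = X.ncard := by rw [← hAcoe, Set.ncard_coe_finset]
  obtain ⟨a, ha, b, hb, hab⟩ := (Set.one_lt_ncard (Set.toFinite X)).mp (by omega)
  have h1R : (1 : F) ∈ quotSet X :=
    ⟨a, ha, b, hb, a, ha, b, hb, hab, (div_self (sub_ne_zero.mpr hab)).symm⟩
  have h0R : (0 : F) ∈ quotSet X := ⟨a, ha, a, ha, a, ha, b, hb, hab, by simp⟩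
  have hQfin : (quotSet X).Finite := Set.toFinite _
  obtain ⟨Rf, hRcoe⟩ : ∃ Rf : Finset F, (↑Rf : Set F) = quotSet X :=
    ⟨hQfin.toFinset, hQfin.coe_toFinset⟩
  have hRcard : Rf.card = (quotSet X).ncard := by rw [← hRcoe, Set.ncard_coe_finset]
  have h0f : (0 : F) ∈ Rf := by rw [← Finset.mem_coe, hRcoe]; exact h0R
  have h1f : (1 : F) ∈ Rf := by rw [← Finset.mem_coe, hRcoe]; exact h1R
  set S := Rf.erase (0 : F) with hS
  have hSne : S.Nonempty := ⟨1, mem_erase.mpr ⟨one_ne_zero, h1f⟩⟩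
  obtain ⟨r, hrS, hrmin⟩ := S.exists_min_image (fun r => (quadN r A).card) hSne
  have hr0 : r ≠ 0 := (mem_erase.mp hrS).1
  have hrR : r ∈ quotSet X := by
    rw [← hRcoe]; exact Finset.mem_coe.mpr (mem_erase.mp hrS).2
  refine ⟨r, hrR, ?_⟩
  have hcount : S.card * (quadN r A).card ≤ A.card ^ 4 := by
    calc S.card * (quadN r A).card = S.card • (quadN r A).card := (nsmul_eq_mul _ _).symm
      _ ≤ ∑ s ∈ S, (quadN s A).card := card_nsmul_le_sum S _ _ (fun x hx => hrmin x hx)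
      _ ≤ A.card ^ 4 := sum_quadN_card_le A S
  have hSc : S.card = Rf.card - 1 := card_erase_of_mem h0f
  have hRf2 : 2 ≤ Rf.card := one_lt_card.mpr ⟨0, h0f, 1, h1f, by norm_num⟩
  intro X' hX'sub hX'card
  have hX'fin : X'.Finite := Set.toFinite _
  obtain ⟨B, hBcoe⟩ : ∃ B : Finset F, (↑B : Set F) = X' := ⟨hX'fin.toFinset, hX'fin.coe_toFinset⟩
  have hBcard : B.card = X'.ncard := by rw [← hBcoe, Set.ncard_coe_finset]
  have hBsub : B ⊆ A := by
    rw [← Finset.coe_subset, hAcoe, hBcoe]; exact hX'sub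
  have hset : X' + r • X' = ↑(B + r • B) := by
    rw [Finset.coe_add, Finset.coe_smul_finset, hBcoe]
  have hncard : (X' + r • X').ncard = (B + r • B).card := by
    rw [hset, Set.ncard_coe_finset]
  have hCS : B.card ^ 2 * B.card ^ 2 ≤ (B + r • B).card * E[B, r • B] := by
    have h := le_card_add_mul_addEnergy B (r • B)
    have hsm : (r • B).card = B.card := by
      rw [smul_finset_def]
      exact card_image_of_injective B (MulAction.injective₀ hr0)
    rwa [hsm] at h
  have hmono : E[B, r • B] ≤ E[A, r • A] :=
    addEnergy_mono hBsub (smul_finset_subset_smul_finset hBsub)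
  have hEA : E[A, r • A] ≤ A.card ^ 2 + (quadN r A).card := by
    rw [← quad_card_eq_energy hr0]
    exact quad_card_le hr0 A
  -- pass to the reals
  set n : ℝ := (X.ncard : ℝ) with hn
  set m : ℝ := (B.card : ℝ) with hm
  set P : ℝ := (((B + r • B).card : ℕ) : ℝ) with hP
  set Eb : ℝ := ((E[B, r • B] : ℕ) : ℝ) with hEb
  set Nc : ℝ := (((quadN r A).card : ℕ) : ℝ) with hNc
  have hAn : (A.card : ℝ) = n := by rw [hn]; exact_mod_cast hAcard
  have hn2 : (2 : ℝ) ≤ n := by rw [hn]; exact_mod_cast hX2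
  have hn0 : (0 : ℝ) ≤ n := by linarith
  have hN0 : (0 : ℝ) ≤ Nc := by rw [hNc]; exact Nat.cast_nonneg _
  have hP0 : (0 : ℝ) ≤ P := by rw [hP]; exact Nat.cast_nonneg _
  have f1 : m ^ 2 * m ^ 2 ≤ P * Eb := by
    rw [hm, hP, hEb]; exact_mod_cast hCS
  have f23 : Eb ≤ n ^ 2 + Nc := by
    rw [hEb, hNc, ← hAn]; exact_mod_cast hmono.trans hEA
  have hScR : (S.card : ℝ) = (Rf.card : ℝ) - 1 := by
    rw [hSc, Nat.cast_sub (by omega : 1 ≤ Rf.card), Nat.cast_one]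
  have f4 : ((Rf.card : ℝ) - 1) * Nc ≤ n ^ 4 := by
    have h : (S.card : ℝ) * Nc ≤ ((A.card : ℝ)) ^ 4 := by
      rw [hNc]; exact_mod_cast hcount
    rwa [hScR, hAn] at h
  have f5 : K * n ^ 2 ≤ (Rf.card : ℝ) := by
    rw [hRcard]; exact hR
  have f6 : (2 : ℝ) ≤ (Rf.card : ℝ) := by exact_mod_cast hRf2
  have f7 : δ * n ≤ m := by rw [hm, hBcard, hn]; exact hX'card
  have hm0 : (0 : ℝ) ≤ m := le_trans (by positivity) f7
  rw [hncard, ← hP]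
  rw [div_mul_eq_mul_div, div_le_iff₀ (by positivity : (0 : ℝ) < K + 2)]
  have hKn2 : (0 : ℝ) ≤ K * n ^ 2 := by positivity
  have g1 : K * n ^ 2 * Nc ≤ 2 * n ^ 4 := by
    nlinarith [mul_nonneg (sub_nonneg.mpr f5) hN0, mul_nonneg (sub_nonneg.mpr f6) hN0, f4]
  have g2 : K * n ^ 2 * Eb ≤ (K + 2) * n ^ 4 := by
    nlinarith [g1, mul_le_mul_of_nonneg_left f23 hKn2]
  have g3 : (δ * n) ^ 4 ≤ m ^ 4 := pow_le_pow_left₀ (by positivity) f7 4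
  have h5 : K * n ^ 2 * (m ^ 2 * m ^ 2) ≤ K * n ^ 2 * (P * Eb) :=
    mul_le_mul_of_nonneg_left f1 hKn2
  have h6 : P * (K * n ^ 2 * Eb) ≤ P * ((K + 2) * n ^ 4) :=
    mul_le_mul_of_nonneg_left g2 hP0
  have hfin : δ ^ 4 * K * n ^ 2 * n ^ 4 ≤ P * (K + 2) * n ^ 4 := by
    nlinarith [g3, h5, h6, mul_le_mul_of_nonneg_left g3 hKn2]
  have hn4 : (0 : ℝ) < n ^ 4 := by positivity
  exact le_of_mul_le_mul_right (by linarith) hn4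
end

section
/- Let q be a prime power and F_q the finite field with q elements. Let X₁, X₂ ⊆ F_q be nonempty finite sets. Then there exists an element ξ ∈ F_q with ξ ≠ 0 such that |X₁ + ξ·X₂| ≥ |X₁|·|X₂|·(q − 1) / (|X₁|·|X₂| + (q − 1)), where X₁ + ξ·X₂ = {a + ξ·b : a ∈ X₁, b ∈ X₂}. -/
open scoped Pointwise
open Finset

section Aux
variable {F : Type*} [Field F] [Fintype F] [DecidableEq F]

lemma energy_smul_eq (A B : Finset F) {ξ : F} (hξ : ξ ≠ 0) :
    Finset.addEnergy A (ξ • B) =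
      (((A ×ˢ A) ×ˢ B ×ˢ B).filter fun x : (F × F) × F × F =>
        x.1.1 + ξ * x.2.1 = x.1.2 + ξ * x.2.2).card := by
  rw [Finset.addEnergy]
  refine Finset.card_nbij' (fun x => ((x.1.1, x.1.2), (ξ⁻¹ * x.2.1, ξ⁻¹ * x.2.2)))
    (fun x => ((x.1.1, x.1.2), (ξ * x.2.1, ξ * x.2.2))) ?_ ?_ ?_ ?_
  · rintro ⟨⟨a1, a2⟩, b1, b2⟩ hx
    simp only [Finset.mem_coe, mem_filter, mem_product] at hx ⊢
    obtain ⟨⟨⟨ha1, ha2⟩, hb1, hb2⟩, heq⟩ := hx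
    obtain ⟨c1, hc1, rfl⟩ := Finset.mem_smul_finset.mp hb1
    obtain ⟨c2, hc2, rfl⟩ := Finset.mem_smul_finset.mp hb2
    simp only [smul_eq_mul, ← mul_assoc, inv_mul_cancel₀ hξ, one_mul]
    refine ⟨⟨⟨ha1, ha2⟩, hc1, hc2⟩, ?_⟩
    simpa [smul_eq_mul, inv_mul_cancel_left₀ hξ] using heq
  · rintro ⟨⟨a1, a2⟩, b1, b2⟩ hx
    simp only [Finset.mem_coe, mem_filter, mem_product] at hx ⊢
    obtain ⟨⟨⟨ha1, ha2⟩, hb1, hb2⟩, heq⟩ := hx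
    refine ⟨⟨⟨ha1, ha2⟩, Finset.mem_smul_finset.mpr ⟨b1, hb1, rfl⟩,
      Finset.mem_smul_finset.mpr ⟨b2, hb2, rfl⟩⟩, by simpa [smul_eq_mul] using heq⟩
  · rintro ⟨⟨a1, a2⟩, b1, b2⟩ hx
    simp [mul_inv_cancel_left₀ hξ]
  · rintro ⟨⟨a1, a2⟩, b1, b2⟩ hx
    simp [inv_mul_cancel_left₀ hξ]

lemma sum_energy_le (A B : Finset F) :
    ∑ ξ ∈ Finset.univ.erase (0 : F),
      (((A ×ˢ A) ×ˢ B ×ˢ B).filter fun x : (F × F) × F × F =>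
        x.1.1 + ξ * x.2.1 = x.1.2 + ξ * x.2.2).card
      ≤ A.card * B.card * (Fintype.card F - 1) + (A.card * B.card) ^ 2 := by
  have key : ∀ ξ ∈ Finset.univ.erase (0 : F),
      (((A ×ˢ A) ×ˢ B ×ˢ B).filter fun x : (F × F) × F × F =>
        x.1.1 + ξ * x.2.1 = x.1.2 + ξ * x.2.2).card
      = ∑ x ∈ (A ×ˢ A) ×ˢ B ×ˢ B,
          if x.1.1 + ξ * x.2.1 = x.1.2 + ξ * x.2.2 then 1 else 0 := by
    intro ξ _; rw [Finset.card_filter]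
  rw [Finset.sum_congr rfl key, Finset.sum_comm]
  have hcard : (Finset.univ.erase (0 : F)).card = Fintype.card F - 1 := by
    rw [Finset.card_erase_of_mem (Finset.mem_univ _), Finset.card_univ]
  have inner : ∀ x ∈ (A ×ˢ A) ×ˢ B ×ˢ B,
      (∑ ξ ∈ Finset.univ.erase (0 : F),
        if x.1.1 + ξ * x.2.1 = x.1.2 + ξ * x.2.2 then 1 else 0)
      ≤ (if x.1.1 = x.1.2 ∧ x.2.1 = x.2.2 then Fintype.card F - 1 else 0) + 1 := by
    rintro ⟨⟨a1, a2⟩, b1, b2⟩ _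
    rw [← Finset.card_filter]
    by_cases hd : a1 = a2 ∧ b1 = b2
    · refine le_trans (le_trans (Finset.card_filter_le _ _) hcard.le) ?_
      simp [hd]
    · simp only [if_neg hd]
      by_cases hb : b1 = b2
      · subst hb
        have ha : a1 ≠ a2 := fun h => hd ⟨h, rfl⟩
        have hemp : (Finset.univ.erase (0 : F)).filter
            (fun ξ => a1 + ξ * b1 = a2 + ξ * b1) = ∅ := by
          ext ξ; simp only [Finset.mem_filter, Finset.notMem_empty, iff_false, not_and]
          intro _ h; exact ha (add_right_cancel h)
        rw [hemp]; simp
      · have hsub : (Finset.univ.erase (0 : F)).filter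
            (fun ξ => a1 + ξ * b1 = a2 + ξ * b2) ⊆ {(a2 - a1) / (b1 - b2)} := by
          intro ξ hξ
          simp only [Finset.mem_filter] at hξ
          have hb' : b1 - b2 ≠ 0 := sub_ne_zero.mpr hb
          simp only [Finset.mem_singleton]
          rw [eq_div_iff hb']
          linear_combination hξ.2
        calc _ ≤ ({(a2 - a1) / (b1 - b2)} : Finset F).card := Finset.card_le_card hsub
          _ = 1 := Finset.card_singleton _
  calc ∑ x ∈ (A ×ˢ A) ×ˢ B ×ˢ B, ∑ ξ ∈ Finset.univ.erase (0 : F),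
        (if x.1.1 + ξ * x.2.1 = x.1.2 + ξ * x.2.2 then 1 else 0)
      ≤ ∑ x ∈ (A ×ˢ A) ×ˢ B ×ˢ B,
        ((if x.1.1 = x.1.2 ∧ x.2.1 = x.2.2 then Fintype.card F - 1 else 0) + 1) :=
        Finset.sum_le_sum inner
    _ = (((A ×ˢ A) ×ˢ B ×ˢ B).filter
          (fun x : (F × F) × F × F => x.1.1 = x.1.2 ∧ x.2.1 = x.2.2)).card
          * (Fintype.card F - 1) + ((A ×ˢ A) ×ˢ B ×ˢ B).card := by
        rw [Finset.sum_add_distrib, Finset.sum_ite, Finset.sum_const, Finset.sum_const,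
          Finset.sum_const]
        simp [mul_comm]
    _ ≤ A.card * B.card * (Fintype.card F - 1) + (A.card * B.card) ^ 2 := by
        have hdiag : (((A ×ˢ A) ×ˢ B ×ˢ B).filter
            (fun x : (F × F) × F × F => x.1.1 = x.1.2 ∧ x.2.1 = x.2.2)).card
            = A.card * B.card := by
          rw [← Finset.card_product]
          refine (Finset.card_nbij' (fun x => (x.1.1, x.2.1))
            (fun y => ((y.1, y.1), (y.2, y.2))) ?_ ?_ ?_ ?_)
          · rintro ⟨⟨a1, a2⟩, b1, b2⟩ hx
            simp only [Finset.mem_coe, mem_filter, mem_product] at hx ⊢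
            exact ⟨hx.1.1.1, hx.1.2.1⟩
          · rintro ⟨a, b⟩ hy
            simp only [Finset.mem_coe, mem_product, mem_filter] at hy ⊢
            exact ⟨⟨⟨hy.1, hy.1⟩, hy.2, hy.2⟩, by simp⟩
          · rintro ⟨⟨a1, a2⟩, b1, b2⟩ hx
            simp only [Finset.mem_coe, mem_filter, mem_product] at hx
            obtain ⟨-, h1, h2⟩ := hx
            simp [h1, h2]
          · rintro ⟨a, b⟩ _; rfl
        rw [hdiag]
        gcongr
        rw [Finset.card_product, Finset.card_product, Finset.card_product]
        ring_nf
        exact le_of_eq (by ring)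

end Aux

/-- **Lemma 2.5 (Bourgain–Glibichuk pivot).** For nonempty `X₁, X₂ ⊆ F_q`, there exists
`ξ ≠ 0` such that `|X₁ + ξX₂| ≥ |X₁||X₂|(q-1)/(|X₁||X₂| + (q-1))`. -/
theorem exists_dilate_large_sumset
    (q : ℕ) (F : Type) [Field F] [Fintype F] (hq : Fintype.card F = q)
    (X₁ X₂ : Set F) (h₁ : X₁.Nonempty) (h₂ : X₂.Nonempty) :
    ∃ ξ : F, ξ ≠ 0 ∧
      (X₁.ncard : ℝ) * (X₂.ncard : ℝ) * ((q : ℝ) - 1) /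
          ((X₁.ncard : ℝ) * (X₂.ncard : ℝ) + ((q : ℝ) - 1)) ≤
        ((X₁ + ξ • X₂).ncard : ℝ) := by
  classical
  set A := X₁.toFinset with hA
  set B := X₂.toFinset with hB
  -- pick ξ minimizing the dilated energy
  have h0ne : (Finset.univ.erase (0 : F)).Nonempty :=
    ⟨1, Finset.mem_erase.mpr ⟨one_ne_zero, Finset.mem_univ _⟩⟩
  obtain ⟨ξ, hξmem, hξmin⟩ := Finset.exists_min_image (Finset.univ.erase (0 : F))
    (fun ξ => (((A ×ˢ A) ×ˢ B ×ˢ B).filter fun x : (F × F) × F × F =>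
        x.1.1 + ξ * x.2.1 = x.1.2 + ξ * x.2.2).card) h0ne
  have hξ0 : ξ ≠ 0 := (Finset.mem_erase.mp hξmem).1
  refine ⟨ξ, hξ0, ?_⟩
  set D : F → ℕ := fun ξ => (((A ×ˢ A) ×ˢ B ×ˢ B).filter fun x : (F × F) × F × F =>
        x.1.1 + ξ * x.2.1 = x.1.2 + ξ * x.2.2).card with hD
  -- pigeonhole: (q-1) * D ξ ≤ N(q-1) + N²
  have hq2 : 2 ≤ q := hq ▸ Fintype.one_lt_card
  have hsum : (q - 1) * D ξ ≤ A.card * B.card * (q - 1) + (A.card * B.card) ^ 2 := by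
    have := sum_energy_le A B
    rw [hq] at this
    calc (q - 1) * D ξ = ∑ _ ∈ Finset.univ.erase (0 : F), D ξ := by
          rw [Finset.sum_const, Finset.card_erase_of_mem (Finset.mem_univ _),
            Finset.card_univ, hq, smul_eq_mul]
      _ ≤ ∑ η ∈ Finset.univ.erase (0 : F), D η := Finset.sum_le_sum fun η hη => hξmin η hη
      _ ≤ _ := this
  -- Cauchy–Schwarz
  have hCS : A.card ^ 2 * B.card ^ 2 ≤ (A + ξ • B).card * D ξ := by
    have h := Finset.le_card_add_mul_addEnergy A (ξ • B)
    have hc : (ξ • B).card = B.card := by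
      rw [Finset.smul_finset_def]
      exact Finset.card_image_of_injective _ (MulAction.injective₀ hξ0)
    rwa [energy_smul_eq A B hξ0, hc] at h
  -- translate ncard to card
  have hX1 : X₁.ncard = A.card := Set.ncard_eq_toFinset_card' X₁
  have hX2 : X₂.ncard = B.card := Set.ncard_eq_toFinset_card' X₂
  have hS : (X₁ + ξ • X₂).ncard = (A + ξ • B).card := by
    rw [Set.ncard_eq_toFinset_card' (X₁ + ξ • X₂)]
    congr 1
    rw [Set.toFinset_add, Set.toFinset_smul_set]
  rw [hX1, hX2, hS]
  -- now pure real arithmetic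
  have hA0 : 0 < A.card := Finset.card_pos.mpr (Set.toFinset_nonempty.mpr h₁)
  have hB0 : 0 < B.card := Finset.card_pos.mpr (Set.toFinset_nonempty.mpr h₂)
  have hq1 : (1 : ℝ) ≤ (q : ℝ) - 1 := by
    have : (2 : ℝ) ≤ (q : ℝ) := by exact_mod_cast hq2
    linarith
  have ha1 : (1 : ℝ) ≤ (A.card : ℝ) := by exact_mod_cast hA0
  have hb1 : (1 : ℝ) ≤ (B.card : ℝ) := by exact_mod_cast hB0
  have hs0 : (0 : ℝ) ≤ ((A + ξ • B).card : ℝ) := Nat.cast_nonneg _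
  have hone : 1 ≤ q := by omega
  have hsumR : ((q : ℝ) - 1) * (D ξ : ℝ)
      ≤ (A.card : ℝ) * (B.card : ℝ) * ((q : ℝ) - 1) + ((A.card : ℝ) * (B.card : ℝ)) ^ 2 := by
    calc ((q : ℝ) - 1) * (D ξ : ℝ) = (((q - 1) * D ξ : ℕ) : ℝ) := by
          push_cast [Nat.cast_sub hone]; ring
      _ ≤ ((A.card * B.card * (q - 1) + (A.card * B.card) ^ 2 : ℕ) : ℝ) :=
          Nat.cast_le.mpr hsum
      _ = _ := by push_cast [Nat.cast_sub hone]; ring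
  have hCSR : ((A.card : ℝ)) ^ 2 * ((B.card : ℝ)) ^ 2
      ≤ ((A + ξ • B).card : ℝ) * (D ξ : ℝ) := by exact_mod_cast hCS
  have key : ((A.card : ℝ) * B.card) * ((A.card : ℝ) * B.card) * ((q : ℝ) - 1)
      ≤ ((A + ξ • B).card : ℝ) * ((A.card : ℝ) * B.card)
        * (((A.card : ℝ) * B.card) + ((q : ℝ) - 1)) := by
    nlinarith [mul_le_mul_of_nonneg_left hsumR hs0,
      mul_le_mul_of_nonneg_right hCSR (by linarith : (0 : ℝ) ≤ (q : ℝ) - 1)]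
  rw [div_le_iff₀ (by nlinarith)]
  have hN : (0 : ℝ) < (A.card : ℝ) * B.card := by nlinarith
  have key' : ((A.card : ℝ) * B.card) * ((A.card : ℝ) * (B.card : ℝ) * ((q : ℝ) - 1))
      ≤ ((A.card : ℝ) * B.card) *
        (((A + ξ • B).card : ℝ) * ((A.card : ℝ) * (B.card : ℝ) + ((q : ℝ) - 1))) := by
    linear_combination key
  exact le_of_mul_le_mul_left key' hN
end

section
/- Let q be a prime power and F_q the finite field with q elements. For every constant K ≥ 1 there exists a constant c > 0 (depending only on K) with the following property: let X, Y ⊆ F_q be nonempty finite sets with 0 ∉ X, let D ⊆ F_q be a nonempty set of slopes with |D| = L, let N ≥ 1 be an integer, and let P ⊆ X × Y be a nonempty set of points such that every (x, y) ∈ P satisfies y = ξ·x for some ξ ∈ D, and such that for every ξ ∈ D the set P_ξ = {x ∈ X : (x, ξ·x) ∈ P} satisfies N ≤ |P_ξ| ≤ K·N. Then there exist x₀ ∈ X and y₀ ∈ Y such that, writing Y_{x₀} = {y ∈ Y : (x₀, y) ∈ P} and X_{y₀} = {x ∈ X : (x, y₀) ∈ P}, one has |Y_{x₀}| ≥ c·L·N/|X|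 and |X_{y₀}| ≥ c·L·N/|Y|, and there exists a subset Ỹ ⊆ Y_{x₀} with |Ỹ| ≥ c·L²·N²/(|X|²·|Y|) such that for every z ∈ Ỹ one has |P_{z/x₀} ∩ X_{y₀}| ≥ c·L²·N³/(|X|²·|Y|²). -/
open scoped Pointwise

open Finset

section Helpers

variable {F : Type} [Field F] [DecidableEq F]

private lemma card_eq_sum_rows (Q : Finset (F × F)) (s t : Finset F)
    (h1 : ∀ p ∈ Q, p.1 ∈ s) (h2 : ∀ p ∈ Q, p.2 ∈ t) :
    Q.card = ∑ x ∈ s, (t.filter fun y => (x, y) ∈ Q).card := by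
  rw [Finset.card_eq_sum_card_fiberwise (f := Prod.fst) (t := s) h1]
  refine Finset.sum_congr rfl fun x hx => ?_
  refine Finset.card_bij (fun p _ => p.2) ?_ ?_ ?_
  · intro p hp
    rw [Finset.mem_filter] at hp
    rw [Finset.mem_filter]
    refine ⟨h2 p hp.1, ?_⟩
    have e : (x, p.2) = p := by rw [← hp.2]
    rw [e]; exact hp.1
  · intro p hp p' hp' h
    rw [Finset.mem_filter] at hp hp'
    change p.2 = p'.2 at h
    exact Prod.ext (hp.2.trans hp'.2.symm) h
  · intro y hy
    rw [Finset.mem_filter] at hy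
    exact ⟨(x, y), Finset.mem_filter.mpr ⟨hy.2, rfl⟩, rfl⟩

private lemma card_eq_sum_cols (Q : Finset (F × F)) (s t : Finset F)
    (h1 : ∀ p ∈ Q, p.1 ∈ s) (h2 : ∀ p ∈ Q, p.2 ∈ t) :
    Q.card = ∑ y ∈ t, (s.filter fun x => (x, y) ∈ Q).card := by
  rw [Finset.card_eq_sum_card_fiberwise (f := Prod.snd) (t := t) h2]
  refine Finset.sum_congr rfl fun y hy => ?_
  refine Finset.card_bij (fun p _ => p.1) ?_ ?_ ?_
  · intro p hp
    rw [Finset.mem_filter] at hp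
    rw [Finset.mem_filter]
    refine ⟨h1 p hp.1, ?_⟩
    have e : (p.1, y) = p := by rw [← hp.2]
    rw [e]; exact hp.1
  · intro p hp p' hp' h
    rw [Finset.mem_filter] at hp hp'
    change p.1 = p'.1 at h
    exact Prod.ext h (hp.2.trans hp'.2.symm)
  · intro x hx
    rw [Finset.mem_filter] at hx
    exact ⟨(x, y), Finset.mem_filter.mpr ⟨hx.2, rfl⟩, rfl⟩

private lemma card_eq_sum_slopes (Q : Finset (F × F)) (Df Xf : Finset F)
    (h0 : ∀ p ∈ Q, p.1 ≠ 0) (hx : ∀ p ∈ Q, p.1 ∈ Xf) (hs : ∀ p ∈ Q, p.2 / p.1 ∈ Df) :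
    Q.card = ∑ ξ ∈ Df, (Xf.filter fun x => (x, ξ * x) ∈ Q).card := by
  rw [Finset.card_eq_sum_card_fiberwise (f := fun p => p.2 / p.1) (t := Df) (fun p (hp : p ∈ Q) => hs p hp)]
  refine Finset.sum_congr rfl fun ξ _ => ?_
  refine Finset.card_bij (fun p _ => p.1) ?_ ?_ ?_
  · intro p hp
    rw [Finset.mem_filter] at hp
    rw [Finset.mem_filter]
    have h2 : p.2 = ξ * p.1 := (div_eq_iff (h0 p hp.1)).mp hp.2
    refine ⟨hx p hp.1, ?_⟩
    have e : (p.1, ξ * p.1) = p := by rw [← h2]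
    rw [e]; exact hp.1
  · intro p hp p' hp' h
    rw [Finset.mem_filter] at hp hp'
    change p.1 = p'.1 at h
    have e : p.2 = p'.2 := by
      rw [(div_eq_iff (h0 p hp.1)).mp hp.2, (div_eq_iff (h0 p' hp'.1)).mp hp'.2, h]
    exact Prod.ext h e
  · intro x hx'
    rw [Finset.mem_filter] at hx'
    refine ⟨(x, ξ * x), Finset.mem_filter.mpr ⟨hx'.2, ?_⟩, rfl⟩
    exact mul_div_cancel_right₀ ξ (h0 (x, ξ * x) hx'.2)

private lemma filter_mem_eq_self {γ : Type*} [DecidableEq γ] {A s : Finset γ} (h : A ⊆ s) :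
    s.filter (fun x => x ∈ A) = A := by
  ext x
  simp only [mem_filter]
  exact ⟨fun h' => h'.2, fun h' => ⟨h h', h'⟩⟩

private lemma sum_weights_comm {γ : Type*} [DecidableEq γ] (E : Finset γ) (A : γ → Finset γ)
    (s : Finset γ) (hA : ∀ ξ ∈ E, A ξ ⊆ s) (g : γ → ℕ) :
    ∑ x ∈ s, (E.filter fun ξ => x ∈ A ξ).card * g x = ∑ ξ ∈ E, ∑ x ∈ A ξ, g x := by
  have h1 : ∀ ξ ∈ E, ∑ x ∈ A ξ, g x = ∑ x ∈ s, if x ∈ A ξ then g x else 0 := by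
    intro ξ hξ
    rw [← Finset.sum_filter, filter_mem_eq_self (hA ξ hξ)]
  rw [Finset.sum_congr rfl h1, Finset.sum_comm]
  refine Finset.sum_congr rfl fun x _ => ?_
  rw [Finset.card_filter, Finset.sum_mul]
  refine Finset.sum_congr rfl fun ξ _ => ?_
  split <;> simp

private lemma sum_sum_filter {γ : Type*} [DecidableEq γ] (E : Finset γ) (A : γ → Finset γ)
    (s : Finset γ) (hA : ∀ ξ ∈ E, A ξ ⊆ s) (h : γ → ℕ) :
    ∑ x ∈ s, ∑ ξ ∈ E.filter (fun ξ => x ∈ A ξ), h ξ = ∑ ξ ∈ E, (A ξ).card * h ξ := by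
  rw [Finset.sum_congr rfl (fun x (_ : x ∈ s) => Finset.sum_filter _ _), Finset.sum_comm]
  refine Finset.sum_congr rfl fun ξ hξ => ?_
  rw [← Finset.sum_filter, filter_mem_eq_self (hA ξ hξ), Finset.sum_const, smul_eq_mul]

private lemma arith_S {l n x y w s : ℝ} (hx : 0 < x) (hy : 0 < y)
    (h1 : l ^ 2 * n ^ 3 / (64 * x) ≤ w) (h2 : w ≤ x * y * s) :
    l ^ 2 * n ^ 3 / (64 * x ^ 2 * y) ≤ s := by
  rw [div_le_iff₀ (by positivity)] at h1 ⊢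
  have h3 : w * (64 * x) ≤ x * y * s * (64 * x) :=
    mul_le_mul_of_nonneg_right h2 (by positivity)
  nlinarith [h1, h3]

private lemma arith_C {l n x y k g s : ℝ} (hx : 0 < x) (hy : 0 < y) (hk : 0 < k) (hn : 0 < n)
    (hS : l ^ 2 * n ^ 3 / (64 * x ^ 2 * y) ≤ s) (hG : s / 2 ≤ g * (k * n)) :
    l ^ 2 * n ^ 2 / (128 * k * x ^ 2 * y) ≤ g := by
  rw [div_le_iff₀ (by positivity)] at hS
  rw [div_le_iff₀ (mul_pos (mul_pos (mul_pos (by norm_num) hk) (pow_pos hx 2)) hy)]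
  refine le_of_mul_le_mul_right ?_ hn
  have h1 : s ≤ 2 * g * (k * n) := by linarith
  have h2 : s * (64 * x ^ 2 * y) ≤ 2 * g * (k * n) * (64 * x ^ 2 * y) :=
    mul_le_mul_of_nonneg_right h1 (by positivity)
  nlinarith [hS, h2]

private lemma arith_D {l n x y s a c : ℝ} (hx : 0 < x) (hy : 0 < y)
    (hS : l ^ 2 * n ^ 3 / (64 * x ^ 2 * y) ≤ s) (key : s ≤ 2 * y * a) (hac : a ≤ c) :
    l ^ 2 * n ^ 3 / (128 * x ^ 2 * y ^ 2) ≤ c := by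
  rw [div_le_iff₀ (by positivity)] at hS
  rw [div_le_iff₀ (by positivity)]
  have h2 : s * (64 * x ^ 2 * y) ≤ 2 * y * a * (64 * x ^ 2 * y) :=
    mul_le_mul_of_nonneg_right key (by positivity)
  have h3 : a * (128 * x ^ 2 * y ^ 2) ≤ c * (128 * x ^ 2 * y ^ 2) :=
    mul_le_mul_of_nonneg_right hac (by positivity)
  nlinarith [hS, h2, h3]

private lemma arith_key {s d y a : ℝ} (hd : d ≤ y) (ha : 0 ≤ a) (h : s ≤ 2 * d * a) :
    s ≤ 2 * y * a := by nlinarith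

set_option maxHeartbeats 1000000 in
private lemma core (K : ℝ) (hK : 1 ≤ K)
    (Xf Yf Df : Finset F) (Pf : Finset (F × F))
    (hXne : Xf.Nonempty) (hYne : Yf.Nonempty) (hX0 : (0 : F) ∉ Xf)
    (hDne : Df.Nonempty)
    (N : ℕ) (hN : 1 ≤ N)
    (hPXY : ∀ p ∈ Pf, p.1 ∈ Xf ∧ p.2 ∈ Yf)
    (hPslope : ∀ p ∈ Pf, p.2 / p.1 ∈ Df)
    (hlow : ∀ ξ ∈ Df, N ≤ (Xf.filter fun x => (x, ξ * x) ∈ Pf).card)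
    (hhigh : ∀ ξ ∈ Df, ((Xf.filter fun x => (x, ξ * x) ∈ Pf).card : ℝ) ≤ K * N) :
    ∃ x₀ ∈ Xf, ∃ y₀ ∈ Yf,
      ((Df.card : ℝ) * N) / (4 * Xf.card) ≤ ((Yf.filter fun y => (x₀, y) ∈ Pf).card : ℝ) ∧
      ((Df.card : ℝ) * N) / (4 * Yf.card) ≤ ((Xf.filter fun x => (x, y₀) ∈ Pf).card : ℝ) ∧
      ∃ G : Finset F,
        (∀ ξ ∈ G, (x₀, ξ * x₀) ∈ Pf) ∧
        ((Df.card : ℝ) ^ 2 * N ^ 2) / (128 * K * Xf.card ^ 2 * Yf.card) ≤ (G.card : ℝ) ∧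
        ∀ ξ ∈ G, ((Df.card : ℝ) ^ 2 * N ^ 3) / (128 * Xf.card ^ 2 * Yf.card ^ 2) ≤
          ((Xf.filter fun x => (x, ξ * x) ∈ Pf ∧ (x, y₀) ∈ Pf).card : ℝ) := by
  classical
  have h0 : ∀ p ∈ Pf, p.1 ≠ 0 := fun p hp h => hX0 (h ▸ (hPXY p hp).1)
  have hx1 : (1 : ℝ) ≤ (Xf.card : ℝ) := by exact_mod_cast Finset.card_pos.mpr hXne
  have hy1 : (1 : ℝ) ≤ (Yf.card : ℝ) := by exact_mod_cast Finset.card_pos.mpr hYne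
  have hl1 : (1 : ℝ) ≤ (Df.card : ℝ) := by exact_mod_cast Finset.card_pos.mpr hDne
  have hn1 : (1 : ℝ) ≤ (N : ℝ) := by exact_mod_cast hN
  have hxpos : (0 : ℝ) < (Xf.card : ℝ) := lt_of_lt_of_le one_pos hx1
  have hypos : (0 : ℝ) < (Yf.card : ℝ) := lt_of_lt_of_le one_pos hy1
  have hlpos : (0 : ℝ) < (Df.card : ℝ) := lt_of_lt_of_le one_pos hl1
  have hnpos : (0 : ℝ) < (N : ℝ) := lt_of_lt_of_le one_pos hn1
  have hKpos : (0 : ℝ) < K := lt_of_lt_of_le one_pos hK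
  -- |P| ≥ L * N
  have hPcard : Df.card * N ≤ Pf.card := by
    rw [card_eq_sum_slopes Pf Df Xf h0 (fun p hp => (hPXY p hp).1) hPslope]
    calc Df.card * N = ∑ _ξ ∈ Df, N := by rw [Finset.sum_const, smul_eq_mul]
      _ ≤ _ := Finset.sum_le_sum hlow
  -- popular rows and columns
  obtain ⟨rowf, hrowf⟩ : ∃ f : F → Finset F, ∀ x, f x = Yf.filter fun y => (x, y) ∈ Pf :=
    ⟨_, fun _ => rfl⟩
  obtain ⟨colf, hcolf⟩ : ∃ f : F → Finset F, ∀ y, f y = Xf.filter fun x => (x, y) ∈ Pf :=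
    ⟨_, fun _ => rfl⟩
  obtain ⟨X1, hX1⟩ : ∃ s : Finset F,
      s = Xf.filter fun x => Df.card * N ≤ 4 * Xf.card * (rowf x).card := ⟨_, rfl⟩
  obtain ⟨Y1, hY1⟩ : ∃ s : Finset F,
      s = Yf.filter fun y => Df.card * N ≤ 4 * Yf.card * (colf y).card := ⟨_, rfl⟩
  obtain ⟨P', hP'⟩ : ∃ s : Finset (F × F),
      s = Pf.filter fun p => p.1 ∈ X1 ∧ p.2 ∈ Y1 := ⟨_, rfl⟩
  have hP'sub : P' ⊆ Pf := by rw [hP']; exact Finset.filter_subset _ _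
  -- bad rows have few points
  have hQr : ((Pf.filter fun p => p.1 ∉ X1).card : ℝ) ≤ (Df.card : ℝ) * N / 4 := by
    obtain ⟨Qr, hQrdef⟩ : ∃ s : Finset (F × F), s = Pf.filter fun p => p.1 ∉ X1 := ⟨_, rfl⟩
    have hQrsub : Qr ⊆ Pf := by rw [hQrdef]; exact Finset.filter_subset _ _
    have e := card_eq_sum_rows Qr Xf Yf
      (fun p hp => (hPXY p (hQrsub hp)).1)
      (fun p hp => (hPXY p (hQrsub hp)).2)
    have hb : ∀ x ∈ Xf, ((Yf.filter fun y => (x, y) ∈ Qr).card : ℝ) ≤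
        (Df.card : ℝ) * N / (4 * Xf.card) := by
      intro x hx
      by_cases hxX1 : x ∈ X1
      · have he : (Yf.filter fun y => (x, y) ∈ Qr) = ∅ := by
          rw [Finset.filter_eq_empty_iff]
          intro y _hy hmem
          rw [hQrdef, Finset.mem_filter] at hmem
          exact hmem.2 hxX1
        rw [he]
        simp only [Finset.card_empty, Nat.cast_zero]
        positivity
      · have hsub2 : (Yf.filter fun y => (x, y) ∈ Qr) ⊆ rowf x := by
          intro y hy
          rw [Finset.mem_filter] at hy
          rw [hrowf]
          exact Finset.mem_filter.mpr ⟨hy.1, hQrsub hy.2⟩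
        have h1 : ((Yf.filter fun y => (x, y) ∈ Qr).card : ℝ) ≤ ((rowf x).card : ℝ) := by
          exact_mod_cast Finset.card_le_card hsub2
        have h2 : ¬ (Df.card * N ≤ 4 * Xf.card * (rowf x).card) := by
          intro hcon
          exact hxX1 (by rw [hX1]; exact Finset.mem_filter.mpr ⟨hx, hcon⟩)
        have h3 : (4 : ℝ) * Xf.card * (rowf x).card ≤ (Df.card : ℝ) * N := by
          have := le_of_lt (Nat.lt_of_not_le h2)
          exact_mod_cast this
        rw [le_div_iff₀ (by positivity)]
        nlinarith [h1, h3]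
    calc ((Pf.filter fun p => p.1 ∉ X1).card : ℝ)
        = ∑ x ∈ Xf, ((Yf.filter fun y => (x, y) ∈ Qr).card : ℝ) := by
          rw [← hQrdef, e]; push_cast; ring
      _ ≤ ∑ _x ∈ Xf, (Df.card : ℝ) * N / (4 * Xf.card) := Finset.sum_le_sum hb
      _ = (Df.card : ℝ) * N / 4 := by
          rw [Finset.sum_const, nsmul_eq_mul]
          field_simp
  -- bad columns have few points
  have hQc : ((Pf.filter fun p => p.2 ∉ Y1).card : ℝ) ≤ (Df.card : ℝ) * N / 4 := by
    obtain ⟨Qc, hQcdef⟩ : ∃ s : Finset (F × F), s = Pf.filter fun p => p.2 ∉ Y1 := ⟨_, rfl⟩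
    have hQcsub : Qc ⊆ Pf := by rw [hQcdef]; exact Finset.filter_subset _ _
    have e := card_eq_sum_cols Qc Xf Yf
      (fun p hp => (hPXY p (hQcsub hp)).1)
      (fun p hp => (hPXY p (hQcsub hp)).2)
    have hb : ∀ y ∈ Yf, ((Xf.filter fun x => (x, y) ∈ Qc).card : ℝ) ≤
        (Df.card : ℝ) * N / (4 * Yf.card) := by
      intro y hy
      by_cases hyY1 : y ∈ Y1
      · have he : (Xf.filter fun x => (x, y) ∈ Qc) = ∅ := by
          rw [Finset.filter_eq_empty_iff]
          intro x _hx hmem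
          rw [hQcdef, Finset.mem_filter] at hmem
          exact hmem.2 hyY1
        rw [he]
        simp only [Finset.card_empty, Nat.cast_zero]
        positivity
      · have hsub2 : (Xf.filter fun x => (x, y) ∈ Qc) ⊆ colf y := by
          intro x hx
          rw [Finset.mem_filter] at hx
          rw [hcolf]
          exact Finset.mem_filter.mpr ⟨hx.1, hQcsub hx.2⟩
        have h1 : ((Xf.filter fun x => (x, y) ∈ Qc).card : ℝ) ≤ ((colf y).card : ℝ) := by
          exact_mod_cast Finset.card_le_card hsub2
        have h2 : ¬ (Df.card * N ≤ 4 * Yf.card * (colf y).card) := by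
          intro hcon
          exact hyY1 (by rw [hY1]; exact Finset.mem_filter.mpr ⟨hy, hcon⟩)
        have h3 : (4 : ℝ) * Yf.card * (colf y).card ≤ (Df.card : ℝ) * N := by
          have := le_of_lt (Nat.lt_of_not_le h2)
          exact_mod_cast this
        rw [le_div_iff₀ (by positivity)]
        nlinarith [h1, h3]
    calc ((Pf.filter fun p => p.2 ∉ Y1).card : ℝ)
        = ∑ y ∈ Yf, ((Xf.filter fun x => (x, y) ∈ Qc).card : ℝ) := by
          rw [← hQcdef, e]; push_cast; ring
      _ ≤ ∑ _y ∈ Yf, (Df.card : ℝ) * N / (4 * Yf.card) := Finset.sum_le_sum hb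
      _ = (Df.card : ℝ) * N / 4 := by
          rw [Finset.sum_const, nsmul_eq_mul]
          field_simp
  -- P' is big
  have hP'card : (Df.card : ℝ) * N / 2 ≤ (P'.card : ℝ) := by
    have hsub : Pf ⊆ P' ∪ (Pf.filter fun p => p.1 ∉ X1) ∪ (Pf.filter fun p => p.2 ∉ Y1) := by
      intro p hp
      by_cases h1 : p.1 ∈ X1
      · by_cases h2 : p.2 ∈ Y1
        · exact Finset.mem_union_left _ (Finset.mem_union_left _
            (by rw [hP']; exact Finset.mem_filter.mpr ⟨hp, h1, h2⟩))
        · exact Finset.mem_union_right _ (Finset.mem_filter.mpr ⟨hp, h2⟩)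
      · exact Finset.mem_union_left _ (Finset.mem_union_right _ (Finset.mem_filter.mpr ⟨hp, h1⟩))
    have hc : Pf.card ≤ P'.card + (Pf.filter fun p => p.1 ∉ X1).card
        + (Pf.filter fun p => p.2 ∉ Y1).card := by
      calc Pf.card ≤ (P' ∪ (Pf.filter fun p => p.1 ∉ X1) ∪ (Pf.filter fun p => p.2 ∉ Y1)).card :=
            Finset.card_le_card hsub
        _ ≤ (P' ∪ (Pf.filter fun p => p.1 ∉ X1)).card + (Pf.filter fun p => p.2 ∉ Y1).card :=
            Finset.card_union_le _ _
        _ ≤ P'.card + (Pf.filter fun p => p.1 ∉ X1).card + (Pf.filter fun p => p.2 ∉ Y1).card := by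
            have := Finset.card_union_le P' (Pf.filter fun p => p.1 ∉ X1)
            omega
    have hc' : ((Df.card : ℝ) * N) ≤ (P'.card : ℝ) + (Pf.filter fun p => p.1 ∉ X1).card
        + (Pf.filter fun p => p.2 ∉ Y1).card := by
      have h1 : ((Df.card * N : ℕ) : ℝ) ≤ (Pf.card : ℝ) := by exact_mod_cast hPcard
      push_cast at h1
      have h2 : (Pf.card : ℝ) ≤ (P'.card : ℝ) + ((Pf.filter fun p => p.1 ∉ X1).card : ℝ)
          + ((Pf.filter fun p => p.2 ∉ Y1).card : ℝ) := by exact_mod_cast hc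
      linarith
    linarith
  -- lines of P'
  obtain ⟨line', hline'⟩ : ∃ f : F → Finset F,
      ∀ ξ, f ξ = Xf.filter fun x => (x, ξ * x) ∈ P' := ⟨_, fun _ => rfl⟩
  obtain ⟨D', hD'⟩ : ∃ s : Finset F, s = Df.filter fun ξ => N ≤ 4 * (line' ξ).card := ⟨_, rfl⟩
  have hD'subDf : D' ⊆ Df := by rw [hD']; exact Finset.filter_subset _ _
  have hline'subXf : ∀ ξ, line' ξ ⊆ Xf := by
    intro ξ; rw [hline']; exact Finset.filter_subset _ _
  have hD'sum : (Df.card : ℝ) * N / 4 ≤ ∑ ξ ∈ D', ((line' ξ).card : ℝ) := by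
    have e : P'.card = ∑ ξ ∈ Df, (line' ξ).card := by
      have e0 := card_eq_sum_slopes P' Df Xf (fun p hp => h0 p (hP'sub hp))
        (fun p hp => (hPXY p (hP'sub hp)).1) (fun p hp => hPslope p (hP'sub hp))
      rw [e0]
      exact Finset.sum_congr rfl fun ξ _ => by rw [hline']
    have esplit : ∑ ξ ∈ D', (line' ξ).card
        + ∑ ξ ∈ Df.filter (fun ξ => ¬ (N ≤ 4 * (line' ξ).card)), (line' ξ).card
        = ∑ ξ ∈ Df, (line' ξ).card := by
      rw [hD']
      exact Finset.sum_filter_add_sum_filter_not Df _ _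
    have hrest : (∑ ξ ∈ Df.filter (fun ξ => ¬ (N ≤ 4 * (line' ξ).card)),
        ((line' ξ).card : ℝ)) ≤ (Df.card : ℝ) * (N / 4) := by
      have hb : ∀ ξ ∈ Df.filter (fun ξ => ¬ (N ≤ 4 * (line' ξ).card)),
          ((line' ξ).card : ℝ) ≤ (N : ℝ) / 4 := by
        intro ξ hξ
        rw [Finset.mem_filter] at hξ
        have := le_of_lt (Nat.lt_of_not_le hξ.2)
        have h4 : (4 : ℝ) * (line' ξ).card ≤ (N : ℝ) := by exact_mod_cast this
        linarith
      calc (∑ ξ ∈ Df.filter (fun ξ => ¬ (N ≤ 4 * (line' ξ).card)), ((line' ξ).card : ℝ))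
          ≤ ∑ _ξ ∈ Df.filter (fun ξ => ¬ (N ≤ 4 * (line' ξ).card)), (N : ℝ) / 4 :=
            Finset.sum_le_sum hb
        _ = ((Df.filter (fun ξ => ¬ (N ≤ 4 * (line' ξ).card))).card : ℝ) * ((N : ℝ) / 4) := by
            rw [Finset.sum_const, nsmul_eq_mul]
        _ ≤ (Df.card : ℝ) * (N / 4) := by
            have h5 : ((Df.filter (fun ξ => ¬ (N ≤ 4 * (line' ξ).card))).card : ℝ)
                ≤ (Df.card : ℝ) := by
              exact_mod_cast Finset.card_le_card (Finset.filter_subset _ _)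
            nlinarith [hnpos]
    have ecast : (∑ ξ ∈ D', ((line' ξ).card : ℝ))
        + ∑ ξ ∈ Df.filter (fun ξ => ¬ (N ≤ 4 * (line' ξ).card)), ((line' ξ).card : ℝ)
        = (P'.card : ℝ) := by
      rw [e]
      exact_mod_cast congrArg (Nat.cast : ℕ → ℝ) esplit
    linarith
  -- slope degree of a point
  obtain ⟨dxf, hdxf⟩ : ∃ f : F → Finset F,
      ∀ x, f x = D'.filter fun ξ => x ∈ line' ξ := ⟨_, fun _ => rfl⟩
  have hT : ∑ x ∈ Xf, (dxf x).card = ∑ ξ ∈ D', (line' ξ).card := by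
    have h := sum_weights_comm D' line' Xf (fun ξ _ => hline'subXf ξ) (fun _ => 1)
    simp only [mul_one, Finset.sum_const, smul_eq_mul] at h
    calc ∑ x ∈ Xf, (dxf x).card
        = ∑ x ∈ Xf, (D'.filter fun ξ => x ∈ line' ξ).card := by
          exact Finset.sum_congr rfl fun x _ => by rw [hdxf]
      _ = ∑ ξ ∈ D', (line' ξ).card := by
          rw [h]
  have hsq : ∑ x ∈ Xf, (dxf x).card * (dxf x).card
      = ∑ ξ ∈ D', ∑ x ∈ line' ξ, (dxf x).card := by
    have h := sum_weights_comm D' line' Xf (fun ξ _ => hline'subXf ξ) (fun x => (dxf x).card)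
    calc ∑ x ∈ Xf, (dxf x).card * (dxf x).card
        = ∑ x ∈ Xf, (D'.filter fun ξ => x ∈ line' ξ).card * (dxf x).card := by
          exact Finset.sum_congr rfl fun x _ => by rw [hdxf]
      _ = ∑ ξ ∈ D', ∑ x ∈ line' ξ, (dxf x).card := h
  -- the main weighted count W
  obtain ⟨W, hW⟩ : ∃ w : ℕ,
      w = ∑ ξ ∈ D', (line' ξ).card * ∑ x ∈ line' ξ, (dxf x).card := ⟨_, rfl⟩
  have hWlow : (Df.card : ℝ) ^ 2 * N ^ 3 / (64 * Xf.card) ≤ (W : ℝ) := by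
    have hCS : (∑ x ∈ Xf, ((dxf x).card : ℝ)) ^ 2
        ≤ (Xf.card : ℝ) * ∑ x ∈ Xf, ((dxf x).card : ℝ) ^ 2 := by
      have h := Finset.sum_mul_sq_le_sq_mul_sq Xf (fun _ => (1 : ℝ))
        (fun x => ((dxf x).card : ℝ))
      simpa using h
    have hTR : (Df.card : ℝ) * N / 4 ≤ ∑ x ∈ Xf, ((dxf x).card : ℝ) := by
      have e1 : (∑ x ∈ Xf, ((dxf x).card : ℝ)) = ∑ ξ ∈ D', ((line' ξ).card : ℝ) := by
        exact_mod_cast congrArg (Nat.cast : ℕ → ℝ) hT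
      rw [e1]
      exact hD'sum
    have hTnn : (0 : ℝ) ≤ ∑ x ∈ Xf, ((dxf x).card : ℝ) :=
      Finset.sum_nonneg fun i _ => Nat.cast_nonneg _
    have hsqR : ((Df.card : ℝ) * N / 4) ^ 2 / (Xf.card : ℝ)
        ≤ ∑ x ∈ Xf, ((dxf x).card : ℝ) ^ 2 := by
      rw [div_le_iff₀ hxpos]
      nlinarith [hCS, hTR, hTnn]
    have hWsum : (W : ℝ)
        = ∑ ξ ∈ D', ((line' ξ).card : ℝ) * ∑ x ∈ line' ξ, ((dxf x).card : ℝ) := by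
      rw [hW]
      push_cast
      ring
    have hterm : ∀ ξ ∈ D', (N : ℝ) / 4 * ∑ x ∈ line' ξ, ((dxf x).card : ℝ)
        ≤ ((line' ξ).card : ℝ) * ∑ x ∈ line' ξ, ((dxf x).card : ℝ) := by
      intro ξ hξ
      rw [hD', Finset.mem_filter] at hξ
      have h4 : (N : ℝ) ≤ 4 * (line' ξ).card := by exact_mod_cast hξ.2
      have hsum_nn : (0 : ℝ) ≤ ∑ x ∈ line' ξ, ((dxf x).card : ℝ) :=
        Finset.sum_nonneg fun i _ => Nat.cast_nonneg _
      nlinarith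
    have hWlow1 : (N : ℝ) / 4 * ∑ x ∈ Xf, ((dxf x).card : ℝ) ^ 2 ≤ (W : ℝ) := by
      have e2 : (∑ x ∈ Xf, ((dxf x).card : ℝ) ^ 2)
          = ∑ ξ ∈ D', ∑ x ∈ line' ξ, ((dxf x).card : ℝ) := by
        have h := congrArg (Nat.cast : ℕ → ℝ) hsq
        push_cast at h
        calc (∑ x ∈ Xf, ((dxf x).card : ℝ) ^ 2)
            = ∑ x ∈ Xf, ((dxf x).card : ℝ) * ((dxf x).card : ℝ) := by
              exact Finset.sum_congr rfl fun x _ => by ring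
          _ = ∑ ξ ∈ D', ∑ x ∈ line' ξ, ((dxf x).card : ℝ) := h
      rw [hWsum, e2, Finset.mul_sum]
      exact Finset.sum_le_sum hterm
    have hfinal : (Df.card : ℝ) ^ 2 * N ^ 3 / (64 * Xf.card)
        ≤ (N : ℝ) / 4 * (((Df.card : ℝ) * N / 4) ^ 2 / (Xf.card : ℝ)) := by
      apply le_of_eq
      field_simp
      ring
    have h6 : (N : ℝ) / 4 * (((Df.card : ℝ) * N / 4) ^ 2 / (Xf.card : ℝ))
        ≤ (N : ℝ) / 4 * ∑ x ∈ Xf, ((dxf x).card : ℝ) ^ 2 := by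
      have hnn : (0 : ℝ) ≤ (N : ℝ) / 4 := by positivity
      exact mul_le_mul_of_nonneg_left hsqR hnn
    linarith
  -- columns and rows of P'
  obtain ⟨col', hcol'⟩ : ∃ f : F → Finset F,
      ∀ y, f y = Xf.filter fun x => (x, y) ∈ P' := ⟨_, fun _ => rfl⟩
  obtain ⟨row', hrow'⟩ : ∃ f : F → Finset F,
      ∀ x, f x = Yf.filter fun y => (x, y) ∈ P' := ⟨_, fun _ => rfl⟩
  -- ∑∑ f ≥ W
  have hinter : ∀ ξ y, line' ξ ∩ col' y = (line' ξ).filter fun x' => (x', y) ∈ P' := by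
    intro ξ y
    ext x'
    simp only [Finset.mem_inter, Finset.mem_filter, hcol' y, hline' ξ]
    constructor
    · rintro ⟨⟨h1, h2⟩, ⟨_h3, h4⟩⟩
      exact ⟨⟨h1, h2⟩, h4⟩
    · rintro ⟨⟨h1, h2⟩, h4⟩
      exact ⟨⟨h1, h2⟩, ⟨h1, h4⟩⟩
  have hsumy : ∀ ξ, ∑ y ∈ Yf, (line' ξ ∩ col' y).card = ∑ x' ∈ line' ξ, (row' x').card := by
    intro ξ
    have e1 : ∀ y, (line' ξ ∩ col' y).card
        = ∑ x' ∈ line' ξ, if (x', y) ∈ P' then 1 else 0 := by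
      intro y
      rw [hinter ξ y, Finset.card_filter]
    calc ∑ y ∈ Yf, (line' ξ ∩ col' y).card
        = ∑ y ∈ Yf, ∑ x' ∈ line' ξ, if (x', y) ∈ P' then 1 else 0 :=
          Finset.sum_congr rfl fun y _ => e1 y
      _ = ∑ x' ∈ line' ξ, ∑ y ∈ Yf, if (x', y) ∈ P' then 1 else 0 := Finset.sum_comm
      _ = ∑ x' ∈ line' ξ, (row' x').card := by
          refine Finset.sum_congr rfl fun x' _ => ?_
          rw [hrow', Finset.card_filter]
  have hdxrow : ∀ x' ∈ Xf, (dxf x').card ≤ (row' x').card := by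
    intro x' hx'
    have hx'0 : x' ≠ 0 := fun h => hX0 (h ▸ hx')
    refine Finset.card_le_card_of_injOn (fun ξ' => ξ' * x') ?_ ?_
    · intro ξ' hξ'
      rw [hdxf, Finset.mem_coe, Finset.mem_filter] at hξ'
      have hmem : (x', ξ' * x') ∈ P' := by
        have h := hξ'.2
        rw [hline', Finset.mem_filter] at h
        exact h.2
      rw [hrow', Finset.mem_coe, Finset.mem_filter]
      exact ⟨(hPXY _ (hP'sub hmem)).2, hmem⟩
    · intro a _ b _ hab
      exact mul_left_injective₀ hx'0 hab
  have hmain : W ≤ ∑ x ∈ Xf, ∑ y ∈ Yf, ∑ ξ ∈ dxf x, (line' ξ ∩ col' y).card := by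
    have e1 : ∀ x, ∑ y ∈ Yf, ∑ ξ ∈ dxf x, (line' ξ ∩ col' y).card
        = ∑ ξ ∈ dxf x, ∑ x' ∈ line' ξ, (row' x').card := by
      intro x
      rw [Finset.sum_comm]
      exact Finset.sum_congr rfl fun ξ _ => hsumy ξ
    have e2 : ∑ x ∈ Xf, ∑ ξ ∈ dxf x, ∑ x' ∈ line' ξ, (dxf x').card
        = ∑ ξ ∈ D', (line' ξ).card * ∑ x' ∈ line' ξ, (dxf x').card := by
      have h := sum_sum_filter D' line' Xf (fun ξ _ => hline'subXf ξ)
        (fun ξ => ∑ x' ∈ line' ξ, (dxf x').card)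
      calc ∑ x ∈ Xf, ∑ ξ ∈ dxf x, ∑ x' ∈ line' ξ, (dxf x').card
          = ∑ x ∈ Xf, ∑ ξ ∈ D'.filter (fun ξ => x ∈ line' ξ),
              ∑ x' ∈ line' ξ, (dxf x').card := by
            exact Finset.sum_congr rfl fun x _ => by rw [hdxf]
        _ = ∑ ξ ∈ D', (line' ξ).card * ∑ x' ∈ line' ξ, (dxf x').card := h
    calc W = ∑ ξ ∈ D', (line' ξ).card * ∑ x' ∈ line' ξ, (dxf x').card := hW
      _ = ∑ x ∈ Xf, ∑ ξ ∈ dxf x, ∑ x' ∈ line' ξ, (dxf x').card := e2.symm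
      _ ≤ ∑ x ∈ Xf, ∑ ξ ∈ dxf x, ∑ x' ∈ line' ξ, (row' x').card := by
          refine Finset.sum_le_sum fun x _ => ?_
          refine Finset.sum_le_sum fun ξ _ => ?_
          refine Finset.sum_le_sum fun x' hx' => ?_
          exact hdxrow x' (hline'subXf ξ hx')
      _ = ∑ x ∈ Xf, ∑ y ∈ Yf, ∑ ξ ∈ dxf x, (line' ξ ∩ col' y).card :=
          Finset.sum_congr rfl fun x _ => (e1 x).symm
  -- pigeonhole
  obtain ⟨p₀, hp₀mem, hp₀max⟩ := Finset.exists_max_image (Xf ×ˢ Yf)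
    (fun p => ∑ ξ ∈ dxf p.1, (line' ξ ∩ col' p.2).card) (hXne.product hYne)
  obtain ⟨hx₀Xf, hy₀Yf⟩ := Finset.mem_product.mp hp₀mem
  obtain ⟨x₀, hx₀def⟩ : ∃ x : F, x = p₀.1 := ⟨_, rfl⟩
  obtain ⟨y₀, hy₀def⟩ : ∃ y : F, y = p₀.2 := ⟨_, rfl⟩
  rw [← hx₀def] at hx₀Xf
  rw [← hy₀def] at hy₀Yf
  obtain ⟨S, hSdef⟩ : ∃ s : ℕ, s = ∑ ξ ∈ dxf x₀, (line' ξ ∩ col' y₀).card := ⟨_, rfl⟩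
  have hSmax : ∑ x ∈ Xf, ∑ y ∈ Yf, ∑ ξ ∈ dxf x, (line' ξ ∩ col' y).card
      ≤ Xf.card * Yf.card * S := by
    have hb : ∀ p ∈ Xf ×ˢ Yf, ∑ ξ ∈ dxf p.1, (line' ξ ∩ col' p.2).card ≤ S := by
      intro p hp
      have h := hp₀max p hp
      rw [hSdef, hx₀def, hy₀def]
      exact h
    calc ∑ x ∈ Xf, ∑ y ∈ Yf, ∑ ξ ∈ dxf x, (line' ξ ∩ col' y).card
        = ∑ p ∈ Xf ×ˢ Yf, ∑ ξ ∈ dxf p.1, (line' ξ ∩ col' p.2).card := by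
          rw [Finset.sum_product]
      _ ≤ (Xf ×ˢ Yf).card • S := Finset.sum_le_card_nsmul _ _ S hb
      _ = Xf.card * Yf.card * S := by rw [Finset.card_product, smul_eq_mul]
  have hSlow : (Df.card : ℝ) ^ 2 * N ^ 3 / (64 * Xf.card ^ 2 * Yf.card) ≤ (S : ℝ) := by
    have h1 : (W : ℝ) ≤ (Xf.card : ℝ) * Yf.card * S := by
      exact_mod_cast le_trans hmain hSmax
    exact arith_S hxpos hypos hWlow h1
  have hSpos : S ≠ 0 := by
    have hpos : (0 : ℝ) < (S : ℝ) := lt_of_lt_of_le (by positivity) hSlow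
    exact_mod_cast hpos.ne'
  -- extract witnesses
  have hsum_ne : (∑ ξ ∈ dxf x₀, (line' ξ ∩ col' y₀).card) ≠ 0 := by
    rw [← hSdef]; exact hSpos
  obtain ⟨ξ₁, hξ₁mem, hξ₁ne⟩ := Finset.exists_ne_zero_of_sum_ne_zero hsum_ne
  have hξ₁' : ξ₁ ∈ D' ∧ x₀ ∈ line' ξ₁ := by
    have := hξ₁mem
    simp only [hdxf, Finset.mem_filter] at this
    exact this
  have hx₀P' : (x₀, ξ₁ * x₀) ∈ P' := by
    have := hξ₁'.2
    simp only [hline', Finset.mem_filter] at this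
    exact this.2
  have hx₀X1 : x₀ ∈ X1 := by
    have := hx₀P'
    simp only [hP', Finset.mem_filter] at this
    exact this.2.1
  obtain ⟨x₁, hx₁⟩ := Finset.card_pos.mp (Nat.pos_of_ne_zero hξ₁ne)
  have hx₁col : x₁ ∈ col' y₀ := (Finset.mem_inter.mp hx₁).2
  have hy₀P' : (x₁, y₀) ∈ P' := by
    have := hx₁col
    simp only [hcol', Finset.mem_filter] at this
    exact this.2
  have hy₀Y1 : y₀ ∈ Y1 := by
    have := hy₀P'
    simp only [hP', Finset.mem_filter] at this
    exact this.2.2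
  -- conclusion (a)
  have hconcA : ((Df.card : ℝ) * N) / (4 * Xf.card) ≤ ((rowf x₀).card : ℝ) := by
    have h1 := hx₀X1
    simp only [hX1, Finset.mem_filter] at h1
    have h3 : ((Df.card : ℝ)) * N ≤ 4 * Xf.card * ((rowf x₀).card : ℝ) := by
      exact_mod_cast h1.2
    rw [div_le_iff₀ (by positivity)]
    linarith
  -- conclusion (b)
  have hconcB : ((Df.card : ℝ) * N) / (4 * Yf.card) ≤ ((colf y₀).card : ℝ) := by
    have h1 := hy₀Y1
    simp only [hY1, Finset.mem_filter] at h1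
    have h3 : ((Df.card : ℝ)) * N ≤ 4 * Yf.card * ((colf y₀).card : ℝ) := by
      exact_mod_cast h1.2
    rw [div_le_iff₀ (by positivity)]
    linarith
  -- L₀ facts
  have hD₀card_pos : 0 < (dxf x₀).card := Finset.card_pos.mpr ⟨ξ₁, hξ₁mem⟩
  have hD₀leY : (dxf x₀).card ≤ Yf.card := by
    refine Finset.card_le_card_of_injOn (fun ξ => ξ * x₀) ?_ ?_
    · intro ξ hξ
      simp only [hdxf, Finset.mem_coe, Finset.mem_filter] at hξ
      have hmem : (x₀, ξ * x₀) ∈ P' := by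
        have := hξ.2
        simp only [hline', Finset.mem_filter] at this
        exact this.2
      exact (hPXY _ (hP'sub hmem)).2
    · intro a _ b _ hab
      exact mul_left_injective₀ (fun h => hX0 (h ▸ hx₀Xf)) hab
  -- rich slopes
  obtain ⟨G, hG⟩ : ∃ s : Finset F, s = (dxf x₀).filter
      (fun ξ => S ≤ 2 * (dxf x₀).card * (line' ξ ∩ col' y₀).card) := ⟨_, rfl⟩
  have hGsub : G ⊆ dxf x₀ := by rw [hG]; exact Finset.filter_subset _ _
  have hGP : ∀ ξ ∈ G, (x₀, ξ * x₀) ∈ Pf := by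
    intro ξ hξ
    have hξ' := hGsub hξ
    simp only [hdxf, Finset.mem_filter] at hξ'
    have := hξ'.2
    simp only [hline', Finset.mem_filter] at this
    exact hP'sub this.2
  have hsplit : ∑ ξ ∈ G, (line' ξ ∩ col' y₀).card
      + ∑ ξ ∈ (dxf x₀).filter
          (fun ξ => ¬ (S ≤ 2 * (dxf x₀).card * (line' ξ ∩ col' y₀).card)),
        (line' ξ ∩ col' y₀).card = S := by
    rw [hG, hSdef]
    exact Finset.sum_filter_add_sum_filter_not _ _ _
  have hL₀pos : (0 : ℝ) < ((dxf x₀).card : ℝ) := by exact_mod_cast hD₀card_pos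
  have hrest2 : (∑ ξ ∈ (dxf x₀).filter
      (fun ξ => ¬ (S ≤ 2 * (dxf x₀).card * (line' ξ ∩ col' y₀).card)),
      ((line' ξ ∩ col' y₀).card : ℝ)) ≤ (S : ℝ) / 2 := by
    have hb : ∀ ξ ∈ (dxf x₀).filter
        (fun ξ => ¬ (S ≤ 2 * (dxf x₀).card * (line' ξ ∩ col' y₀).card)),
        ((line' ξ ∩ col' y₀).card : ℝ) ≤ (S : ℝ) / (2 * (dxf x₀).card) := by
      intro ξ hξ
      rw [Finset.mem_filter] at hξ
      have := le_of_lt (Nat.lt_of_not_le hξ.2)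
      have h4 : 2 * ((dxf x₀).card : ℝ) * ((line' ξ ∩ col' y₀).card : ℝ) ≤ (S : ℝ) := by
        exact_mod_cast this
      rw [le_div_iff₀ (by positivity)]
      linarith
    calc (∑ ξ ∈ (dxf x₀).filter
        (fun ξ => ¬ (S ≤ 2 * (dxf x₀).card * (line' ξ ∩ col' y₀).card)),
        ((line' ξ ∩ col' y₀).card : ℝ))
        ≤ ∑ _ξ ∈ (dxf x₀).filter
            (fun ξ => ¬ (S ≤ 2 * (dxf x₀).card * (line' ξ ∩ col' y₀).card)),
            (S : ℝ) / (2 * (dxf x₀).card) := Finset.sum_le_sum hb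
      _ = (((dxf x₀).filter
            (fun ξ => ¬ (S ≤ 2 * (dxf x₀).card * (line' ξ ∩ col' y₀).card))).card : ℝ)
            * ((S : ℝ) / (2 * (dxf x₀).card)) := by
          rw [Finset.sum_const, nsmul_eq_mul]
      _ ≤ ((dxf x₀).card : ℝ) * ((S : ℝ) / (2 * (dxf x₀).card)) := by
          have h5 : (((dxf x₀).filter
              (fun ξ => ¬ (S ≤ 2 * (dxf x₀).card * (line' ξ ∩ col' y₀).card))).card : ℝ)
              ≤ ((dxf x₀).card : ℝ) := by
            exact_mod_cast Finset.card_le_card (Finset.filter_subset _ _)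
          have h6 : (0 : ℝ) ≤ (S : ℝ) / (2 * (dxf x₀).card) := by positivity
          exact mul_le_mul_of_nonneg_right h5 h6
      _ = (S : ℝ) / 2 := by
          have ha : ((dxf x₀).card : ℝ) ≠ 0 := ne_of_gt hL₀pos
          rw [← mul_div_assoc, mul_comm (2 : ℝ) ((dxf x₀).card : ℝ),
            mul_div_mul_left _ _ ha]
  have hGsum : (S : ℝ) / 2 ≤ ∑ ξ ∈ G, ((line' ξ ∩ col' y₀).card : ℝ) := by
    have hcast : (∑ ξ ∈ G, ((line' ξ ∩ col' y₀).card : ℝ))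
        + ∑ ξ ∈ (dxf x₀).filter
            (fun ξ => ¬ (S ≤ 2 * (dxf x₀).card * (line' ξ ∩ col' y₀).card)),
          ((line' ξ ∩ col' y₀).card : ℝ) = (S : ℝ) := by
      exact_mod_cast congrArg (Nat.cast : ℕ → ℝ) hsplit
    linarith only [hcast, hrest2]
  have haK : ∀ ξ ∈ G, ((line' ξ ∩ col' y₀).card : ℝ) ≤ K * N := by
    intro ξ hξ
    have h1 : (line' ξ ∩ col' y₀).card ≤ (line' ξ).card :=
      Finset.card_le_card Finset.inter_subset_left
    have hsub : line' ξ ⊆ Xf.filter fun x => (x, ξ * x) ∈ Pf := by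
      intro x hx
      simp only [hline', Finset.mem_filter] at hx
      exact Finset.mem_filter.mpr ⟨hx.1, hP'sub hx.2⟩
    have h2 : (line' ξ).card ≤ (Xf.filter fun x => (x, ξ * x) ∈ Pf).card :=
      Finset.card_le_card hsub
    have hξDf : ξ ∈ Df := by
      have := hGsub hξ
      simp only [hdxf, Finset.mem_filter] at this
      exact hD'subDf this.1
    have h3 := hhigh ξ hξDf
    have hc : ((line' ξ ∩ col' y₀).card : ℝ)
        ≤ ((Xf.filter fun x => (x, ξ * x) ∈ Pf).card : ℝ) := by
      exact_mod_cast le_trans h1 h2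
    linarith only [hc, h3]
  have hGcardineq : (S : ℝ) / 2 ≤ (G.card : ℝ) * (K * N) := by
    calc (S : ℝ) / 2 ≤ ∑ ξ ∈ G, ((line' ξ ∩ col' y₀).card : ℝ) := hGsum
      _ ≤ G.card • (K * N) := Finset.sum_le_card_nsmul _ _ _ haK
      _ = (G.card : ℝ) * (K * N) := by rw [nsmul_eq_mul]
  have hconcC : ((Df.card : ℝ) ^ 2 * N ^ 2) / (128 * K * Xf.card ^ 2 * Yf.card)
      ≤ (G.card : ℝ) := by
    exact arith_C hxpos hypos hKpos hnpos hSlow hGcardineq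
  have hconcD : ∀ ξ ∈ G, ((Df.card : ℝ) ^ 2 * N ^ 3) / (128 * Xf.card ^ 2 * Yf.card ^ 2)
      ≤ ((Xf.filter fun x => (x, ξ * x) ∈ Pf ∧ (x, y₀) ∈ Pf).card : ℝ) := by
    intro ξ hξ
    have hξG := hξ
    rw [hG, Finset.mem_filter] at hξG
    have hthresh : (S : ℝ) ≤ 2 * ((dxf x₀).card : ℝ) * ((line' ξ ∩ col' y₀).card : ℝ) := by
      exact_mod_cast hξG.2
    have hsub : line' ξ ∩ col' y₀ ⊆ Xf.filter (fun x => (x, ξ * x) ∈ Pf ∧ (x, y₀) ∈ Pf) := by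
      intro x hx
      obtain ⟨hxl, hxc⟩ := Finset.mem_inter.mp hx
      simp only [hline', Finset.mem_filter] at hxl
      simp only [hcol', Finset.mem_filter] at hxc
      exact Finset.mem_filter.mpr ⟨hxl.1, hP'sub hxl.2, hP'sub hxc.2⟩
    have hcard : ((line' ξ ∩ col' y₀).card : ℝ)
        ≤ ((Xf.filter fun x => (x, ξ * x) ∈ Pf ∧ (x, y₀) ∈ Pf).card : ℝ) := by
      exact_mod_cast Finset.card_le_card hsub
    have hL₀y : ((dxf x₀).card : ℝ) ≤ (Yf.card : ℝ) := by exact_mod_cast hD₀leY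
    have hann : (0 : ℝ) ≤ ((line' ξ ∩ col' y₀).card : ℝ) := Nat.cast_nonneg _
    have key : (S : ℝ) ≤ 2 * (Yf.card : ℝ) * ((line' ξ ∩ col' y₀).card : ℝ) :=
      arith_key hL₀y hann hthresh
    exact arith_D hxpos hypos hSlow key hcard
  rw [hrowf] at hconcA
  rw [hcolf] at hconcB
  exact ⟨x₀, hx₀Xf, y₀, hy₀Yf, hconcA, hconcB, G, hGP, hconcC, hconcD⟩


end Helpers

section Wrapper

private lemma arith_a {k l n x r : ℝ} (hk : 1 ≤ k) (hl : 0 ≤ l) (hn : 0 ≤ n) (hx : 0 < x)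
    (h : l * n / (4 * x) ≤ r) : 1 / (128 * k) * l * n / x ≤ r := by
  have hkpos : (0 : ℝ) < k := lt_of_lt_of_le one_pos hk
  have h1 : 1 / (128 * k) * l * n / x ≤ l * n / (4 * x) := by
    rw [div_le_div_iff₀ hx (by positivity)]
    have h2 : 1 / (128 * k) ≤ 1 / 4 := by
      rw [div_le_div_iff₀ (by positivity) (by norm_num)]
      linarith
    have h3 : 1 / (128 * k) * (l * n) ≤ 1 / 4 * (l * n) :=
      mul_le_mul_of_nonneg_right h2 (mul_nonneg hl hn)
    nlinarith [mul_le_mul_of_nonneg_right h3 hx.le]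
  linarith

private lemma arith_b {k l n x y r : ℝ} (hk : 0 < k) (hx : 0 < x) (hy : 0 < y)
    (h : l ^ 2 * n ^ 2 / (128 * k * x ^ 2 * y) ≤ r) :
    1 / (128 * k) * l ^ 2 * n ^ 2 / (x ^ 2 * y) ≤ r := by
  have hkne : k ≠ 0 := ne_of_gt hk
  rw [div_le_iff₀ (by positivity)]
  rw [div_le_iff₀ (by positivity)] at h
  calc 1 / (128 * k) * l ^ 2 * n ^ 2 = 1 / (128 * k) * (l ^ 2 * n ^ 2) := by ring
    _ ≤ 1 / (128 * k) * (r * (128 * k * x ^ 2 * y)) :=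
        mul_le_mul_of_nonneg_left h (by positivity)
    _ = r * (x ^ 2 * y) := by
        field_simp

private lemma arith_d2 {k l n x y r : ℝ} (hk : 1 ≤ k) (hl : 0 ≤ l) (hn : 0 ≤ n)
    (hx : 0 < x) (hy : 0 < y)
    (h : l ^ 2 * n ^ 3 / (128 * x ^ 2 * y ^ 2) ≤ r) :
    1 / (128 * k) * l ^ 2 * n ^ 3 / (x ^ 2 * y ^ 2) ≤ r := by
  have hkpos : (0 : ℝ) < k := lt_of_lt_of_le one_pos hk
  have h1 : 1 / (128 * k) * l ^ 2 * n ^ 3 / (x ^ 2 * y ^ 2)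
      ≤ l ^ 2 * n ^ 3 / (128 * x ^ 2 * y ^ 2) := by
    rw [div_le_div_iff₀ (by positivity) (by positivity)]
    have h2 : 1 / (128 * k) ≤ 1 / 128 := by
      rw [div_le_div_iff₀ (by positivity) (by norm_num)]
      linarith
    have hlnn : (0 : ℝ) ≤ l ^ 2 * n ^ 3 := by positivity
    have h3 : 1 / (128 * k) * (l ^ 2 * n ^ 3) ≤ 1 / 128 * (l ^ 2 * n ^ 3) :=
      mul_le_mul_of_nonneg_right h2 hlnn
    nlinarith [mul_le_mul_of_nonneg_right h3 (by positivity : (0:ℝ) ≤ 128 * x ^ 2 * y ^ 2)]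
  linarith

/-- **Lemma 2.13.** Suppose `P ⊆ X × Y` is supported on `L` lines through the origin with
slopes in `D`, each such line carrying between `N` and `K·N` points of `P`. Then there are a
popular abscissa `x₀` and ordinate `y₀` with `|Y_{x₀}| ≥ cLN/|X|`, `|X_{y₀}| ≥ cLN/|Y|`, and a
subset `Ytilde ⊆ Y_{x₀}` with `|Ytilde| ≥ cL²N²/(|X|²|Y|)` such that
`|P_{z/x₀} ∩ X_{y₀}| ≥ cL²N³/(|X|²|Y|²)` for every `z ∈ Ytilde`. -/
theorem popular_line_structure :
    ∀ K : ℝ, 1 ≤ K → ∃ c : ℝ, 0 < c ∧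
      ∀ (q : ℕ) (F : Type) [Field F] [Fintype F],
        Fintype.card F = q →
        ∀ X Y : Set F, X.Nonempty → Y.Nonempty → (0 : F) ∉ X →
        ∀ D : Set F, D.Nonempty →
        ∀ L N : ℕ, D.ncard = L → 1 ≤ N →
        ∀ P : Set (F × F), P.Nonempty → P ⊆ X ×ˢ Y →
          (∀ p ∈ P, ∃ ξ ∈ D, p.2 = ξ * p.1) →
          (∀ ξ ∈ D, (N : ℝ) ≤ ({x : F | (x, ξ * x) ∈ P}.ncard : ℝ) ∧
            ({x : F | (x, ξ * x) ∈ P}.ncard : ℝ) ≤ K * (N : ℝ)) →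
          ∃ x₀ ∈ X, ∃ y₀ ∈ Y,
            c * (L : ℝ) * (N : ℝ) / (X.ncard : ℝ) ≤
              (({y ∈ Y | (x₀, y) ∈ P}).ncard : ℝ) ∧
            c * (L : ℝ) * (N : ℝ) / (Y.ncard : ℝ) ≤
              (({x ∈ X | (x, y₀) ∈ P}).ncard : ℝ) ∧
            ∃ Ytilde ⊆ {y ∈ Y | (x₀, y) ∈ P},
              c * (L : ℝ) ^ 2 * (N : ℝ) ^ 2 / ((X.ncard : ℝ) ^ 2 * (Y.ncard : ℝ)) ≤
                (Ytilde.ncard : ℝ) ∧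
              ∀ z ∈ Ytilde,
                c * (L : ℝ) ^ 2 * (N : ℝ) ^ 3 /
                    ((X.ncard : ℝ) ^ 2 * (Y.ncard : ℝ) ^ 2) ≤
                  (({x : F | (x, (z / x₀) * x) ∈ P} ∩ {x ∈ X | (x, y₀) ∈ P}).ncard : ℝ) := by
  intro K hK
  have hKpos : (0 : ℝ) < K := lt_of_lt_of_le one_pos hK
  refine ⟨1 / (128 * K), by positivity, ?_⟩
  intro q F _ _ hq X Y hX hY hX0 D hD L N hL hN P hP hPsub hPslope hPreg
  classical
  have hXfin : X.Finite := Set.toFinite X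
  have hYfin : Y.Finite := Set.toFinite Y
  have hDfin : D.Finite := Set.toFinite D
  have hPfin : P.Finite := Set.toFinite P
  obtain ⟨Xf, hXf⟩ : ∃ s : Finset F, ∀ a, a ∈ s ↔ a ∈ X :=
    ⟨hXfin.toFinset, fun a => Set.Finite.mem_toFinset hXfin⟩
  obtain ⟨Yf, hYf⟩ : ∃ s : Finset F, ∀ a, a ∈ s ↔ a ∈ Y :=
    ⟨hYfin.toFinset, fun a => Set.Finite.mem_toFinset hYfin⟩
  obtain ⟨Df, hDf⟩ : ∃ s : Finset F, ∀ a, a ∈ s ↔ a ∈ D :=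
    ⟨hDfin.toFinset, fun a => Set.Finite.mem_toFinset hDfin⟩
  obtain ⟨Pf, hPf⟩ : ∃ s : Finset (F × F), ∀ a, a ∈ s ↔ a ∈ P :=
    ⟨hPfin.toFinset, fun a => Set.Finite.mem_toFinset hPfin⟩
  -- set ↔ finset coercions
  have hXeq : X = ↑Xf := by ext a; rw [Finset.mem_coe, hXf]
  have hYeq : Y = ↑Yf := by ext a; rw [Finset.mem_coe, hYf]
  have hDeq : D = ↑Df := by ext a; rw [Finset.mem_coe, hDf]
  have hXcard : (X.ncard : ℝ) = (Xf.card : ℝ) := by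
    rw [hXeq, Set.ncard_coe_finset]
  have hYcard : (Y.ncard : ℝ) = (Yf.card : ℝ) := by
    rw [hYeq, Set.ncard_coe_finset]
  have hLcard : (L : ℝ) = (Df.card : ℝ) := by
    rw [← hL, hDeq, Set.ncard_coe_finset]
  -- hypotheses for the core lemma
  have hXne : Xf.Nonempty := by
    obtain ⟨a, ha⟩ := hX
    exact ⟨a, (hXf a).mpr ha⟩
  have hYne : Yf.Nonempty := by
    obtain ⟨a, ha⟩ := hY
    exact ⟨a, (hYf a).mpr ha⟩
  have hDne : Df.Nonempty := by
    obtain ⟨a, ha⟩ := hD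
    exact ⟨a, (hDf a).mpr ha⟩
  have hX0f : (0 : F) ∉ Xf := fun h => hX0 ((hXf 0).mp h)
  have hPXYf : ∀ p ∈ Pf, p.1 ∈ Xf ∧ p.2 ∈ Yf := by
    intro p hp
    have hp' := hPsub ((hPf p).mp hp)
    exact ⟨(hXf p.1).mpr hp'.1, (hYf p.2).mpr hp'.2⟩
  have hPslopef : ∀ p ∈ Pf, p.2 / p.1 ∈ Df := by
    intro p hp
    have hpP := (hPf p).mp hp
    obtain ⟨ξ, hξD, hy⟩ := hPslope p hpP
    have hx1 : p.1 ∈ X := (hPsub hpP).1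
    have h0 : p.1 ≠ 0 := fun h => hX0 (h ▸ hx1)
    have he : p.2 / p.1 = ξ := by
      rw [hy]
      exact mul_div_cancel_right₀ ξ h0
    rw [he]
    exact (hDf ξ).mpr hξD
  have hsetline : ∀ ξ : F, {x : F | (x, ξ * x) ∈ P}
      = ↑(Xf.filter fun x => (x, ξ * x) ∈ Pf) := by
    intro ξ
    ext x
    simp only [Set.mem_setOf_eq, Finset.coe_filter, Finset.mem_coe]
    constructor
    · intro hmem
      exact ⟨(hXf x).mpr (hPsub hmem).1, (hPf _).mpr hmem⟩
    · rintro ⟨-, h2⟩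
      exact (hPf _).mp h2
  have hlinecard : ∀ ξ : F, ({x : F | (x, ξ * x) ∈ P}.ncard : ℝ)
      = ((Xf.filter fun x => (x, ξ * x) ∈ Pf).card : ℝ) := by
    intro ξ
    rw [hsetline ξ, Set.ncard_coe_finset]
  have hlowf : ∀ ξ ∈ Df, N ≤ (Xf.filter fun x => (x, ξ * x) ∈ Pf).card := by
    intro ξ hξ
    have h1 := (hPreg ξ ((hDf ξ).mp hξ)).1
    rw [hlinecard ξ] at h1
    exact_mod_cast h1
  have hhighf : ∀ ξ ∈ Df, ((Xf.filter fun x => (x, ξ * x) ∈ Pf).card : ℝ) ≤ K * N := by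
    intro ξ hξ
    have h1 := (hPreg ξ ((hDf ξ).mp hξ)).2
    rw [hlinecard ξ] at h1
    exact h1
  obtain ⟨x₀, hx₀Xf, y₀, hy₀Yf, hA, hB, G, hGP, hGcard, hGeach⟩ :=
    core K hK Xf Yf Df Pf hXne hYne hX0f hDne N hN hPXYf hPslopef hlowf hhighf
  have hx₀X : x₀ ∈ X := (hXf x₀).mp hx₀Xf
  have hy₀Y : y₀ ∈ Y := (hYf y₀).mp hy₀Yf
  have hx₀0 : x₀ ≠ 0 := fun h => hX0 (h ▸ hx₀X)
  have hxpos : (0 : ℝ) < (Xf.card : ℝ) := by exact_mod_cast Finset.card_pos.mpr hXne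
  have hypos : (0 : ℝ) < (Yf.card : ℝ) := by exact_mod_cast Finset.card_pos.mpr hYne
  have hlnn : (0 : ℝ) ≤ (Df.card : ℝ) := Nat.cast_nonneg _
  have hnnn : (0 : ℝ) ≤ (N : ℝ) := Nat.cast_nonneg _
  -- row set identification
  have hrowset : {y ∈ Y | (x₀, y) ∈ P} = ↑(Yf.filter fun y => (x₀, y) ∈ Pf) := by
    ext y
    simp only [Set.mem_setOf_eq, Finset.coe_filter, Finset.mem_coe]
    constructor
    · rintro ⟨h1, h2⟩
      exact ⟨(hYf y).mpr h1, (hPf _).mpr h2⟩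
    · rintro ⟨h1, h2⟩
      exact ⟨(hYf y).mp h1, (hPf _).mp h2⟩
  have hcolset : {x ∈ X | (x, y₀) ∈ P} = ↑(Xf.filter fun x => (x, y₀) ∈ Pf) := by
    ext x
    simp only [Set.mem_setOf_eq, Finset.coe_filter, Finset.mem_coe]
    constructor
    · rintro ⟨h1, h2⟩
      exact ⟨(hXf x).mpr h1, (hPf _).mpr h2⟩
    · rintro ⟨h1, h2⟩
      exact ⟨(hXf x).mp h1, (hPf _).mp h2⟩
  refine ⟨x₀, hx₀X, y₀, hy₀Y, ?_, ?_, ?_⟩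
  · rw [hrowset, Set.ncard_coe_finset, hXcard, hLcard]
    exact arith_a hK hlnn hnnn hxpos hA
  · rw [hcolset, Set.ncard_coe_finset, hYcard, hLcard]
    exact arith_a hK hlnn hnnn hypos hB
  · refine ⟨↑(G.image fun ξ => ξ * x₀), ?_, ?_, ?_⟩
    · -- Ytilde ⊆ row of x₀
      intro z hz
      rw [Finset.mem_coe, Finset.mem_image] at hz
      obtain ⟨ξ, hξG, rfl⟩ := hz
      have hPmem : (x₀, ξ * x₀) ∈ P := (hPf _).mp (hGP ξ hξG)
      exact ⟨(hPsub hPmem).2, hPmem⟩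
    · -- cardinality of Ytilde
      rw [Set.ncard_coe_finset, Finset.card_image_of_injOn
        ((mul_left_injective₀ hx₀0).injOn), hXcard, hYcard, hLcard]
      exact arith_b hKpos hxpos hypos hGcard
    · -- each z in Ytilde
      intro z hz
      rw [Finset.mem_coe, Finset.mem_image] at hz
      obtain ⟨ξ, hξG, rfl⟩ := hz
      have hzdiv : ξ * x₀ / x₀ = ξ := mul_div_cancel_right₀ ξ hx₀0
      have hsub2 : ↑(Xf.filter fun x => (x, ξ * x) ∈ Pf ∧ (x, y₀) ∈ Pf)
          ⊆ {x : F | (x, (ξ * x₀ / x₀) * x) ∈ P} ∩ {x ∈ X | (x, y₀) ∈ P} := by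
        intro x hx
        rw [Finset.mem_coe, Finset.mem_filter] at hx
        obtain ⟨hx1, hx2, hx3⟩ := hx
        constructor
        · rw [Set.mem_setOf_eq, hzdiv]
          exact (hPf _).mp hx2
        · exact ⟨(hXf x).mp hx1, (hPf _).mp hx3⟩
      have hle : ((Xf.filter fun x => (x, ξ * x) ∈ Pf ∧ (x, y₀) ∈ Pf).card : ℝ)
          ≤ (({x : F | (x, (ξ * x₀ / x₀) * x) ∈ P} ∩ {x ∈ X | (x, y₀) ∈ P}).ncard : ℝ) := by
        have h1 := Set.ncard_le_ncard hsub2 (Set.toFinite _)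
        rw [Set.ncard_coe_finset] at h1
        exact_mod_cast h1
      rw [hXcard, hYcard, hLcard]
      exact le_trans (arith_d2 hK hlnn hnnn hxpos hypos (hGeach ξ hξG)) hle

end Wrapper
end
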